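/- arXiv:1606.03753 — 5 statements merged into one kernel-verified Lean document; each statement's English description precedes it below -/
import Mathlib

section
/- Let (V_1, V_2, V_3, V_4) be four disjoint finite planar point sets with same-type transversals such that every transversal is in convex position. Then the parts can be reordered so that every segment with one endpoint in V_1 and the other in V_2 crosses every segment with one endpoint in V_3 and the other in V_4. -/
open Finset
open scoped Classical BigOperators

noncomputable section

/-- Orientation determinant of an ordered triple of planar points. -/
def orient (p q r : ℝ × ℝ) : ℝ :=
  (q.1 - p.1) * (r.2 - p.2) - (q.2 - p.2) * (r.1 - p.1)

/-- A point placement is in general position if no three distinct vertices are collinear. -/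
def GenPos {V : Type*} (f : V → ℝ × ℝ) : Prop :=
  ∀ a b c : V, a ≠ b → a ≠ c → b ≠ c → orient (f a) (f b) (f c) ≠ 0

/-- Two straight-line segments cross: their interiors meet. -/
def SegCross (p q r s : ℝ × ℝ) : Prop :=
  (openSegment ℝ p q ∩ openSegment ℝ r s).Nonempty

/-- Weighted number of crossing pairs of edges in a straight-line drawing:
each unordered crossing pair {ab, cd} is counted once (via 8 ordered tuples). -/
def crossCount {V : Type*} [Fintype V] (w : V → V → ℝ) (f : V → ℝ × ℝ) : ℝ :=
  (∑ a : V, ∑ b : V, ∑ c : V, ∑ d : V,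
      if a ≠ b ∧ a ≠ c ∧ a ≠ d ∧ b ≠ c ∧ b ≠ d ∧ c ≠ d ∧
          SegCross (f a) (f b) (f c) (f d)
        then w a b * w c d else 0) / 8

/-- Rectilinear crossing number of an edge-weighted graph. -/
def wrcr (V : Type*) [Fintype V] (w : V → V → ℝ) : ℝ :=
  sInf {x : ℝ | ∃ f : V → ℝ × ℝ, Function.Injective f ∧ GenPos f ∧ crossCount w f = x}

/-- 0/1 edge weights of a simple graph. -/
def adjW {V : Type*} (G : SimpleGraph V) : V → V → ℝ :=
  fun u v => if G.Adj u v then 1 else 0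

/-- Rectilinear crossing number of a simple graph. -/
def rcr (n : ℕ) (G : SimpleGraph (Fin n)) : ℝ := wrcr (Fin n) (adjW G)

/-- Weighted number of edges between two vertex subsets. -/
def eW {V : Type*} (w : V → V → ℝ) (S T : Finset V) : ℝ :=
  ∑ u ∈ S, ∑ v ∈ T, w u v

/-- Number of edges of a simple graph between two vertex subsets
(edges inside the intersection counted twice). -/
def eG {n : ℕ} (G : SimpleGraph (Fin n)) (S T : Finset (Fin n)) : ℝ :=
  eW (adjW G) S T

/-- The part (fiber) of a colouring. -/
def fiber {n K : ℕ} (col : Fin n → Fin K) (i : Fin K) : Finset (Fin n) :=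
  Finset.univ.filter (fun v => col v = i)

/-- A colouring is an equitable partition: any two parts differ in size by at most one. -/
def EquitableCol {n K : ℕ} (col : Fin n → Fin K) : Prop :=
  ∀ i j : Fin K, (fiber col i).card ≤ (fiber col j).card + 1

/-- All transversals of three point sets have the same orientation. -/
def SameType3 (A B C : Finset (ℝ × ℝ)) : Prop :=
  ∀ a ∈ A, ∀ b ∈ B, ∀ c ∈ C, ∀ a' ∈ A, ∀ b' ∈ B, ∀ c' ∈ C,
    Real.sign (orient a b c) = Real.sign (orient a' b' c')

/-- Four point sets have same-type transversals. -/
def SameTypeQuad (A B C D : Finset (ℝ × ℝ)) : Prop :=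
  SameType3 A B C ∧ SameType3 A B D ∧ SameType3 A C D ∧ SameType3 B C D

/-- Four points are in convex position. -/
def ConvexPos4 (a b c d : ℝ × ℝ) : Prop :=
  a ∉ convexHull ℝ ({b, c, d} : Set (ℝ × ℝ)) ∧
  b ∉ convexHull ℝ ({a, c, d} : Set (ℝ × ℝ)) ∧
  c ∉ convexHull ℝ ({a, b, d} : Set (ℝ × ℝ)) ∧
  d ∉ convexHull ℝ ({a, b, c} : Set (ℝ × ℝ))


-- helpers
lemma aux_sign_pos {x y : ℝ} (h : Real.sign x = Real.sign y) (hy : 0 < y) : 0 < x := by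
  rcases lt_trichotomy x 0 with hx|hx|hx
  · rw [Real.sign_of_neg hx, Real.sign_of_pos hy] at h; norm_num at h
  · rw [hx, Real.sign_zero] at h; rw [Real.sign_of_pos hy] at h; norm_num at h
  · exact hx

lemma aux_sign_neg {x y : ℝ} (h : Real.sign x = Real.sign y) (hy : y < 0) : x < 0 := by
  rcases lt_trichotomy x 0 with hx|hx|hx
  · exact hx
  · rw [hx, Real.sign_zero] at h; rw [Real.sign_of_neg hy] at h; norm_num at h
  · rw [Real.sign_of_pos hx, Real.sign_of_neg hy] at h; norm_num at h

lemma aux_mul_neg_transfer {x y x0 y0 : ℝ} (hx : Real.sign x = Real.sign x0)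
    (hy : Real.sign y = Real.sign y0) (h : x0 * y0 < 0) : x * y < 0 := by
  rcases mul_neg_iff.mp h with ⟨h1, h2⟩ | ⟨h1, h2⟩
  · exact mul_neg_of_pos_of_neg (aux_sign_pos hx h1) (aux_sign_neg hy h2)
  · exact mul_neg_of_neg_of_pos (aux_sign_neg hx h1) (aux_sign_pos hy h2)

lemma aux_st3_swap12 {A B C : Finset (ℝ × ℝ)} (h : SameType3 A B C) : SameType3 B A C := by
  intro b hb a ha c hc b' hb' a' ha' c' hc'
  have e := h a ha b hb c hc a' ha' b' hb' c' hc'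
  rw [show orient b a c = -orient a b c from by unfold orient; ring,
      show orient b' a' c' = -orient a' b' c' from by unfold orient; ring,
      Real.sign_neg, Real.sign_neg, e]

lemma aux_st3_swap23 {A B C : Finset (ℝ × ℝ)} (h : SameType3 A B C) : SameType3 A C B := by
  intro a ha c hc b hb a' ha' c' hc' b' hb'
  have e := h a ha b hb c hc a' ha' b' hb' c' hc'
  rw [show orient a c b = -orient a b c from by unfold orient; ring,
      show orient a' c' b' = -orient a' b' c' from by unfold orient; ring,
      Real.sign_neg, Real.sign_neg, e]

lemma aux_st3_cyc {A B C : Finset (ℝ × ℝ)} (h : SameType3 A B C) : SameType3 B C A := by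
  intro b hb c hc a ha b' hb' c' hc' a' ha'
  have e := h a ha b hb c hc a' ha' b' hb' c' hc'
  rw [show orient b c a = orient a b c from by unfold orient; ring,
      show orient b' c' a' = orient a' b' c' from by unfold orient; ring, e]

lemma aux_cross_of_signs (p q r s : ℝ × ℝ)
    (h1 : orient p q r * orient p q s < 0)
    (h2 : orient r s p * orient r s q < 0) :
    SegCross p q r s := by
  set A := orient r s p with hA
  set B := orient r s q with hB
  set C := orient p q r with hC
  set D := orient p q s with hD
  have hAB : A - B ≠ 0 := by
    rcases mul_neg_iff.mp h2 with ⟨h, h'⟩ | ⟨h, h'⟩ <;> nlinarith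
  have hCD : C - D ≠ 0 := by
    rcases mul_neg_iff.mp h1 with ⟨h, h'⟩ | ⟨h, h'⟩ <;> nlinarith
  set t := A / (A - B) with ht
  set u := C / (C - D) with hu
  have ht0 : 0 < t ∧ t < 1 := by
    rcases mul_neg_iff.mp h2 with ⟨h, h'⟩ | ⟨h, h'⟩
    · constructor
      · apply div_pos h; linarith
      · rw [div_lt_one (by linarith)]; linarith
    · constructor
      · apply div_pos_of_neg_of_neg h; linarith
      · rw [div_lt_one_of_neg (by linarith)]; linarith
  have hu0 : 0 < u ∧ u < 1 := by
    rcases mul_neg_iff.mp h1 with ⟨h, h'⟩ | ⟨h, h'⟩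
    · constructor
      · apply div_pos h; linarith
      · rw [div_lt_one (by linarith)]; linarith
    · constructor
      · apply div_pos_of_neg_of_neg h; linarith
      · rw [div_lt_one_of_neg (by linarith)]; linarith
  have key : (1 - t) • p + t • q = (1 - u) • r + u • s := by
    have e1 : (1 - t) * p.1 + t * q.1 = (1 - u) * r.1 + u * s.1 := by
      rw [ht, hu]; field_simp; rw [hA, hB, hC, hD]; unfold orient; ring
    have e2 : (1 - t) * p.2 + t * q.2 = (1 - u) * r.2 + u * s.2 := by
      rw [ht, hu]; field_simp; rw [hA, hB, hC, hD]; unfold orient; ring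
    apply Prod.ext <;> simp [Prod.fst_add, Prod.snd_add, smul_eq_mul] <;> assumption
  refine ⟨(1 - t) • p + t • q, ?_, ?_⟩
  · rw [openSegment_eq_image]; exact ⟨t, ⟨ht0.1, ht0.2⟩, rfl⟩
  · rw [openSegment_eq_image]; exact ⟨u, ⟨hu0.1, hu0.2⟩, key.symm⟩

lemma aux_in_hull (p q r x : ℝ × ℝ) (h0 : 0 < orient p q r)
    (h1 : 0 ≤ orient q r x) (h2 : 0 ≤ orient r p x) (h3 : 0 ≤ orient p q x) :
    x ∈ convexHull ℝ ({p, q, r} : Set (ℝ × ℝ)) := by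
  have hsum : orient q r x + orient r p x + orient p q x = orient p q r := by
    unfold orient; ring
  have hmem := Finset.centerMass_mem_convexHull (Finset.univ : Finset (Fin 3))
    (s := ({p, q, r} : Set (ℝ × ℝ)))
    (w := ![orient q r x, orient r p x, orient p q x])
    (by intro i _; fin_cases i <;> simpa)
    (by rw [Fin.sum_univ_three]; simp only [Matrix.cons_val_zero, Matrix.cons_val_one,
          Matrix.head_cons, Matrix.cons_val_two, Matrix.tail_cons]; rw [hsum]; exact h0)
    (z := ![p, q, r])
    (by intro i _; fin_cases i <;> simp [Set.mem_insert_iff])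
  have hx : Finset.centerMass (Finset.univ : Finset (Fin 3))
      ![orient q r x, orient r p x, orient p q x] ![p, q, r] = x := by
    rw [Finset.centerMass, Fin.sum_univ_three, Fin.sum_univ_three]
    simp only [Matrix.cons_val_zero, Matrix.cons_val_one, Matrix.head_cons,
      Matrix.cons_val_two, Matrix.tail_cons]
    rw [hsum]
    apply Prod.ext
    · simp only [Prod.smul_fst, Prod.fst_add, smul_eq_mul]
      field_simp
      unfold orient; ring
    · simp only [Prod.smul_snd, Prod.snd_add, smul_eq_mul]
      field_simp
      unfold orient; ring
  rwa [hx] at hmem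

lemma aux_cross_all (A B C D : Finset (ℝ × ℝ))
    (hABC : SameType3 A B C) (hABD : SameType3 A B D)
    (hACD : SameType3 A C D) (hBCD : SameType3 B C D)
    {a0 b0 c0 d0 : ℝ × ℝ} (ha0 : a0 ∈ A) (hb0 : b0 ∈ B) (hc0 : c0 ∈ C) (hd0 : d0 ∈ D)
    (H1 : orient a0 b0 c0 * orient a0 b0 d0 < 0)
    (H2 : orient a0 c0 d0 * orient b0 c0 d0 < 0) :
    ∀ a ∈ A, ∀ b ∈ B, ∀ c ∈ C, ∀ d ∈ D, SegCross a b c d := by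
  intro a ha b hb c hc d hd
  apply aux_cross_of_signs
  · exact aux_mul_neg_transfer (hABC a ha b hb c hc a0 ha0 b0 hb0 c0 hc0)
      (hABD a ha b hb d hd a0 ha0 b0 hb0 d0 hd0) H1
  · rw [show orient c d a = orient a c d from by unfold orient; ring,
        show orient c d b = orient b c d from by unfold orient; ring]
    exact aux_mul_neg_transfer (hACD a ha c hc d hd a0 ha0 c0 hc0 d0 hd0)
      (hBCD b hb c hc d hd b0 hb0 c0 hc0 d0 hd0) H2


/-- If four disjoint planar point sets in general position have same-type transversals and
every transversal is in convex position, then the parts can be reordered so that every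
segment between the first two parts crosses every segment between the last two parts. -/
theorem stmt_7 (P : Fin 4 → Finset (ℝ × ℝ))
    (hdisj : ∀ i j : Fin 4, i ≠ j → Disjoint (P i) (P j))
    (hgp : ∀ a ∈ P 0 ∪ P 1 ∪ P 2 ∪ P 3, ∀ b ∈ P 0 ∪ P 1 ∪ P 2 ∪ P 3,
      ∀ c ∈ P 0 ∪ P 1 ∪ P 2 ∪ P 3, a ≠ b → a ≠ c → b ≠ c → orient a b c ≠ 0)
    (hst : SameTypeQuad (P 0) (P 1) (P 2) (P 3))
    (hconv : ∀ a ∈ P 0, ∀ b ∈ P 1, ∀ c ∈ P 2, ∀ d ∈ P 3, ConvexPos4 a b c d) :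
    ∃ σ : Equiv.Perm (Fin 4),
      ∀ a ∈ P (σ 0), ∀ b ∈ P (σ 1), ∀ c ∈ P (σ 2), ∀ d ∈ P (σ 3),
        SegCross a b c d := by
  
  obtain ⟨h012, h013, h023, h123⟩ := hst
  rcases (P 0).eq_empty_or_nonempty with h0 | ⟨a0, ha0⟩
  · refine ⟨1, ?_⟩
    intro a ha
    rw [show ((1 : Equiv.Perm (Fin 4)) 0) = 0 from rfl, h0] at ha
    exact absurd ha (Finset.notMem_empty a)
  rcases (P 1).eq_empty_or_nonempty with h1 | ⟨b0, hb0⟩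
  · refine ⟨Equiv.swap 0 1, ?_⟩
    intro a ha
    rw [Equiv.swap_apply_left, h1] at ha
    exact absurd ha (Finset.notMem_empty a)
  rcases (P 2).eq_empty_or_nonempty with h2 | ⟨c0, hc0⟩
  · refine ⟨Equiv.swap 0 2, ?_⟩
    intro a ha
    rw [Equiv.swap_apply_left, h2] at ha
    exact absurd ha (Finset.notMem_empty a)
  rcases (P 3).eq_empty_or_nonempty with h3 | ⟨d0, hd0⟩
  · refine ⟨Equiv.swap 0 3, ?_⟩
    intro a ha
    rw [Equiv.swap_apply_left, h3] at ha
    exact absurd ha (Finset.notMem_empty a)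
  have hu0 : a0 ∈ P 0 ∪ P 1 ∪ P 2 ∪ P 3 := by simp [Finset.mem_union, ha0]
  have hu1 : b0 ∈ P 0 ∪ P 1 ∪ P 2 ∪ P 3 := by simp [Finset.mem_union, hb0]
  have hu2 : c0 ∈ P 0 ∪ P 1 ∪ P 2 ∪ P 3 := by simp [Finset.mem_union, hc0]
  have hu3 : d0 ∈ P 0 ∪ P 1 ∪ P 2 ∪ P 3 := by simp [Finset.mem_union, hd0]
  have hne : ∀ {i j : Fin 4} {x y : ℝ × ℝ}, i ≠ j → x ∈ P i → y ∈ P j → x ≠ y := by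
    intro i j x y hij hx hy h
    exact (Finset.disjoint_left.mp (hdisj i j hij) hx) (h ▸ hy)
  have hab : a0 ≠ b0 := hne (by decide) ha0 hb0
  have hac : a0 ≠ c0 := hne (by decide) ha0 hc0
  have had : a0 ≠ d0 := hne (by decide) ha0 hd0
  have hbc : b0 ≠ c0 := hne (by decide) hb0 hc0
  have hbd : b0 ≠ d0 := hne (by decide) hb0 hd0
  have hcd : c0 ≠ d0 := hne (by decide) hc0 hd0
  have hs1 : orient a0 b0 c0 ≠ 0 := hgp a0 hu0 b0 hu1 c0 hu2 hab hac hbc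
  have hs2 : orient a0 b0 d0 ≠ 0 := hgp a0 hu0 b0 hu1 d0 hu3 hab had hbd
  have hs3 : orient a0 c0 d0 ≠ 0 := hgp a0 hu0 c0 hu2 d0 hu3 hac had hcd
  have hs4 : orient b0 c0 d0 ≠ 0 := hgp b0 hu1 c0 hu2 d0 hu3 hbc hbd hcd
  have hlin : orient a0 b0 c0 - orient a0 b0 d0 + orient a0 c0 d0 - orient b0 c0 d0 = 0 := by
    unfold orient; ring
  obtain ⟨hcA, hcB, hcC, hcD⟩ := hconv a0 ha0 b0 hb0 c0 hc0 d0 hd0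
  have nd_d1 : 0 < orient a0 b0 c0 → 0 < orient a0 b0 d0 → orient a0 c0 d0 < 0 →
      0 < orient b0 c0 d0 → False := by
    intro k1 k2 k3 k4
    exact hcD (aux_in_hull a0 b0 c0 d0 k1 (le_of_lt k4)
      (by
        have e : orient c0 a0 d0 = -orient a0 c0 d0 := by unfold orient; ring
        linarith)
      (le_of_lt k2))
  have nd_d2 : orient a0 b0 c0 < 0 → orient a0 b0 d0 < 0 → 0 < orient a0 c0 d0 →
      orient b0 c0 d0 < 0 → False := by
    intro k1 k2 k3 k4
    have m := aux_in_hull a0 c0 b0 d0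
      (by
        have e : orient a0 c0 b0 = -orient a0 b0 c0 := by unfold orient; ring
        linarith)
      (by
        have e : orient c0 b0 d0 = -orient b0 c0 d0 := by unfold orient; ring
        linarith)
      (by
        have e : orient b0 a0 d0 = -orient a0 b0 d0 := by unfold orient; ring
        linarith)
      (le_of_lt k3)
    rw [Set.pair_comm c0 b0] at m
    exact hcD m
  have nd_a1 : 0 < orient a0 b0 c0 → orient a0 b0 d0 < 0 → 0 < orient a0 c0 d0 →
      0 < orient b0 c0 d0 → False := by
    intro k1 k2 k3 k4
    exact hcA (aux_in_hull b0 c0 d0 a0 k4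
      (by
        have e : orient c0 d0 a0 = orient a0 c0 d0 := by unfold orient; ring
        linarith)
      (by
        have e : orient d0 b0 a0 = -orient a0 b0 d0 := by unfold orient; ring
        linarith)
      (by
        have e : orient b0 c0 a0 = orient a0 b0 c0 := by unfold orient; ring
        linarith))
  have nd_a2 : orient a0 b0 c0 < 0 → 0 < orient a0 b0 d0 → orient a0 c0 d0 < 0 →
      orient b0 c0 d0 < 0 → False := by
    intro k1 k2 k3 k4
    have m := aux_in_hull b0 d0 c0 a0
      (by
        have e : orient b0 d0 c0 = -orient b0 c0 d0 := by unfold orient; ring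
        linarith)
      (by
        have e : orient d0 c0 a0 = -orient a0 c0 d0 := by unfold orient; ring
        linarith)
      (by
        have e : orient c0 b0 a0 = -orient a0 b0 c0 := by unfold orient; ring
        linarith)
      (by
        have e : orient b0 d0 a0 = orient a0 b0 d0 := by unfold orient; ring
        linarith)
    rw [Set.pair_comm d0 c0] at m
    exact hcA m
  have nd_b1 : orient a0 b0 c0 < 0 → 0 < orient a0 b0 d0 → 0 < orient a0 c0 d0 →
      0 < orient b0 c0 d0 → False := by
    intro k1 k2 k3 k4
    exact hcB (aux_in_hull a0 c0 d0 b0 k3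
      (by
        have e : orient c0 d0 b0 = orient b0 c0 d0 := by unfold orient; ring
        linarith)
      (by
        have e : orient d0 a0 b0 = orient a0 b0 d0 := by unfold orient; ring
        linarith)
      (by
        have e : orient a0 c0 b0 = -orient a0 b0 c0 := by unfold orient; ring
        linarith))
  have nd_b2 : 0 < orient a0 b0 c0 → orient a0 b0 d0 < 0 → orient a0 c0 d0 < 0 →
      orient b0 c0 d0 < 0 → False := by
    intro k1 k2 k3 k4
    have m := aux_in_hull a0 d0 c0 b0
      (by
        have e : orient a0 d0 c0 = -orient a0 c0 d0 := by unfold orient; ring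
        linarith)
      (by
        have e : orient d0 c0 b0 = -orient b0 c0 d0 := by unfold orient; ring
        linarith)
      (by
        have e : orient c0 a0 b0 = orient a0 b0 c0 := by unfold orient; ring
        linarith)
      (by
        have e : orient a0 d0 b0 = -orient a0 b0 d0 := by unfold orient; ring
        linarith)
    rw [Set.pair_comm d0 c0] at m
    exact hcB m
  have nd_c1 : 0 < orient a0 b0 c0 → 0 < orient a0 b0 d0 → 0 < orient a0 c0 d0 →
      orient b0 c0 d0 < 0 → False := by
    intro k1 k2 k3 k4
    exact hcC (aux_in_hull a0 b0 d0 c0 k2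
      (by
        have e : orient b0 d0 c0 = -orient b0 c0 d0 := by unfold orient; ring
        linarith)
      (by
        have e : orient d0 a0 c0 = orient a0 c0 d0 := by unfold orient; ring
        linarith)
      (le_of_lt k1))
  have nd_c2 : orient a0 b0 c0 < 0 → orient a0 b0 d0 < 0 → orient a0 c0 d0 < 0 →
      0 < orient b0 c0 d0 → False := by
    intro k1 k2 k3 k4
    have m := aux_in_hull a0 d0 b0 c0
      (by
        have e : orient a0 d0 b0 = -orient a0 b0 d0 := by unfold orient; ring
        linarith)
      (by
        have e : orient d0 b0 c0 = orient b0 c0 d0 := by unfold orient; ring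
        linarith)
      (by
        have e : orient b0 a0 c0 = -orient a0 b0 c0 := by unfold orient; ring
        linarith)
      (by
        have e : orient a0 d0 c0 = -orient a0 c0 d0 := by unfold orient; ring
        linarith)
    rw [Set.pair_comm d0 b0] at m
    exact hcC m
  have key : (0 < orient a0 b0 c0 * orient a0 c0 d0 ∧ 0 < orient a0 b0 d0 * orient b0 c0 d0)
      ∨ (orient a0 b0 c0 * orient a0 b0 d0 < 0 ∧ orient a0 c0 d0 * orient b0 c0 d0 < 0)
      ∨ (orient a0 b0 d0 * orient a0 c0 d0 < 0 ∧ orient a0 b0 c0 * orient b0 c0 d0 < 0) := by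
    rcases hs1.lt_or_gt with n1 | p1 <;>
    rcases hs2.lt_or_gt with n2 | p2 <;>
    rcases hs3.lt_or_gt with n3 | p3 <;>
    rcases hs4.lt_or_gt with n4 | p4 <;>
    first
      | exact Or.inl ⟨by nlinarith, by nlinarith⟩
      | exact Or.inr (Or.inl ⟨by nlinarith, by nlinarith⟩)
      | exact Or.inr (Or.inr ⟨by nlinarith, by nlinarith⟩)
      | exact (nd_d1 ‹_› ‹_› ‹_› ‹_›).elim
      | exact (nd_d2 ‹_› ‹_› ‹_› ‹_›).elim
      | exact (nd_a1 ‹_› ‹_› ‹_› ‹_›).elim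
      | exact (nd_a2 ‹_› ‹_› ‹_› ‹_›).elim
      | exact (nd_b1 ‹_› ‹_› ‹_› ‹_›).elim
      | exact (nd_b2 ‹_› ‹_› ‹_› ‹_›).elim
      | exact (nd_c1 ‹_› ‹_› ‹_› ‹_›).elim
      | exact (nd_c2 ‹_› ‹_› ‹_› ‹_›).elim
  rcases key with ⟨k1, k2⟩ | ⟨k1, k2⟩ | ⟨k1, k2⟩
  · refine ⟨⟨![0, 2, 1, 3], ![0, 2, 1, 3], by decide, by decide⟩, ?_⟩
    show ∀ a ∈ P 0, ∀ b ∈ P 2, ∀ c ∈ P 1, ∀ d ∈ P 3, SegCross a b c d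
    exact aux_cross_all (P 0) (P 2) (P 1) (P 3)
      (aux_st3_swap23 h012) h023 h013 (aux_st3_swap12 h123)
      ha0 hc0 hb0 hd0
      (by
        rw [show orient a0 c0 b0 = -orient a0 b0 c0 from by unfold orient; ring]
        nlinarith)
      (by
        rw [show orient c0 b0 d0 = -orient b0 c0 d0 from by unfold orient; ring]
        nlinarith)
  · refine ⟨1, ?_⟩
    show ∀ a ∈ P 0, ∀ b ∈ P 1, ∀ c ∈ P 2, ∀ d ∈ P 3, SegCross a b c d
    exact aux_cross_all (P 0) (P 1) (P 2) (P 3) h012 h013 h023 h123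
      ha0 hb0 hc0 hd0 k1 k2
  · refine ⟨⟨![0, 3, 1, 2], ![0, 2, 3, 1], by decide, by decide⟩, ?_⟩
    show ∀ a ∈ P 0, ∀ b ∈ P 3, ∀ c ∈ P 1, ∀ d ∈ P 2, SegCross a b c d
    exact aux_cross_all (P 0) (P 3) (P 1) (P 2)
      (aux_st3_swap23 h013) (aux_st3_swap23 h023) h012 (aux_st3_cyc (aux_st3_cyc h123))
      ha0 hd0 hb0 hc0
      (by
        rw [show orient a0 d0 b0 = -orient a0 b0 d0 from by unfold orient; ring,
            show orient a0 d0 c0 = -orient a0 c0 d0 from by unfold orient; ring]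
        nlinarith)
      (by
        rw [show orient d0 b0 c0 = orient b0 c0 d0 from by unfold orient; ring]
        exact k2)
end
end

section
/- Let G be an edge-weighted graph on vertex set V with weights in [0,1], drawn with straight lines on a point set (in general position) equipped with an equitable partition V = V_1 ∪ … ∪ V_K. Let T be the set of quadruples of parts {i_1,i_2,i_3,i_4} with same-type transversals all in convex position, ordered so that every V_{i_1}–V_{i_2} segment crosses every V_{i_3}–V_{i_4} segment. Then the weighted number of crossings in the drawing is at least Σ_{(i_1,i_2,i_3,i_4) ∈ T} e_G(V_{i_1},V_{i_2}) · e_G(V_{i_3},V_{i_4}); in particular cr̄(G) is bounded below by this sum for an optimal drawing. -/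
open Finset
open scoped Classical BigOperators

noncomputable section

/-- Auxiliary: the summand of `crossCount`. -/
def ttX {n : ℕ} (w : Fin n → Fin n → ℝ) (f : Fin n → ℝ × ℝ) (a b c d : Fin n) : ℝ :=
  @ite _ (a ≠ b ∧ a ≠ c ∧ a ≠ d ∧ b ≠ c ∧ b ≠ d ∧ c ≠ d ∧
      SegCross (f a) (f b) (f c) (f d)) (Classical.propDecidable _)
    (w a b * w c d) 0

lemma crossCount_eq_ttX {n : ℕ} (w : Fin n → Fin n → ℝ) (f : Fin n → ℝ × ℝ) :
    crossCount w f = (∑ a, ∑ b, ∑ c, ∑ d, ttX w f a b c d) / 8 := by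
  unfold crossCount ttX
  congr 1
  refine Finset.sum_congr rfl fun a _ => Finset.sum_congr rfl fun b _ =>
    Finset.sum_congr rfl fun c _ => Finset.sum_congr rfl fun d _ => ?_
  congr

lemma SegCross.swap₁ {p q r s : ℝ × ℝ} (h : SegCross p q r s) : SegCross q p r s := by
  unfold SegCross at h ⊢; rwa [openSegment_symm ℝ q p]

lemma SegCross.swap₂ {p q r s : ℝ × ℝ} (h : SegCross p q r s) : SegCross p q s r := by
  unfold SegCross at h ⊢; rwa [openSegment_symm ℝ s r]

lemma SegCross.comm {p q r s : ℝ × ℝ} (h : SegCross p q r s) : SegCross r s p q := by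
  unfold SegCross at h ⊢; rwa [Set.inter_comm]

/-- The 8 reorderings of a quadruple of parts giving the same unordered crossing pair. -/
def orbQ {K : ℕ} (q : Fin K × Fin K × Fin K × Fin K) :
    Finset (Fin K × Fin K × Fin K × Fin K) :=
  {(q.1, q.2.1, q.2.2.1, q.2.2.2), (q.2.1, q.1, q.2.2.1, q.2.2.2),
   (q.1, q.2.1, q.2.2.2, q.2.2.1), (q.2.1, q.1, q.2.2.2, q.2.2.1),
   (q.2.2.1, q.2.2.2, q.1, q.2.1), (q.2.2.2, q.2.2.1, q.1, q.2.1),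
   (q.2.2.1, q.2.2.2, q.2.1, q.1), (q.2.2.2, q.2.2.1, q.2.1, q.1)}

lemma orbQ_sets {K : ℕ} (q p : Fin K × Fin K × Fin K × Fin K) (hp : p ∈ orbQ q) :
    ({p.1, p.2.1, p.2.2.1, p.2.2.2} : Finset (Fin K))
      = ({q.1, q.2.1, q.2.2.1, q.2.2.2} : Finset (Fin K)) := by
  simp only [orbQ, Finset.mem_insert, Finset.mem_singleton] at hp
  rcases hp with h|h|h|h|h|h|h|h <;> subst h <;> (ext x; simp; try tauto)

lemma orbQ_sum {K : ℕ} (g : Fin K × Fin K × Fin K × Fin K → ℝ) (i j k l : Fin K)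
    (hij : i ≠ j) (hik : i ≠ k) (hil : i ≠ l) (hjk : j ≠ k) (hjl : j ≠ l) (hkl : k ≠ l) :
    ∑ p ∈ orbQ (i, j, k, l), g p
      = g (i,j,k,l) + g (j,i,k,l) + g (i,j,l,k) + g (j,i,l,k)
        + g (k,l,i,j) + g (l,k,i,j) + g (k,l,j,i) + g (l,k,j,i) := by
  simp only [orbQ]
  rw [Finset.sum_insert (by simp [Prod.ext_iff]; tauto),
      Finset.sum_insert (by simp [Prod.ext_iff]; tauto),
      Finset.sum_insert (by simp [Prod.ext_iff]; tauto),
      Finset.sum_insert (by simp [Prod.ext_iff]; tauto),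
      Finset.sum_insert (by simp [Prod.ext_iff]; tauto),
      Finset.sum_insert (by simp [Prod.ext_iff]; tauto),
      Finset.sum_insert (by simp [Prod.ext_iff]; tauto),
      Finset.sum_singleton]
  ring

/-- If `T` is a family of quadruples of parts (with pairwise distinct underlying
`4`-sets of parts) such that every segment between the first two parts crosses every
segment between the last two parts, then the weighted number of crossings of the drawing
is at least `Σ_{T} e_G(V_{i_1},V_{i_2})·e_G(V_{i_3},V_{i_4})`; in particular `cr̄(G)` is
bounded below by this sum when the drawing is optimal. -/
theorem stmt_8 (n K : ℕ) (w : Fin n → Fin n → ℝ)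
    (hsymm : ∀ u v, w u v = w v u) (hw : ∀ u v, 0 ≤ w u v ∧ w u v ≤ 1)
    (col : Fin n → Fin K) (f : Fin n → ℝ × ℝ)
    (hinj : Function.Injective f) (hgp : GenPos f)
    (T : Finset (Fin K × Fin K × Fin K × Fin K))
    (hdist : ∀ q ∈ T, q.1 ≠ q.2.1 ∧ q.1 ≠ q.2.2.1 ∧ q.1 ≠ q.2.2.2 ∧
      q.2.1 ≠ q.2.2.1 ∧ q.2.1 ≠ q.2.2.2 ∧ q.2.2.1 ≠ q.2.2.2)
    (hsets : ∀ q ∈ T, ∀ q' ∈ T, q ≠ q' →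
      ({q.1, q.2.1, q.2.2.1, q.2.2.2} : Finset (Fin K))
        ≠ ({q'.1, q'.2.1, q'.2.2.1, q'.2.2.2} : Finset (Fin K)))
    (hcross : ∀ q ∈ T, ∀ a ∈ fiber col q.1, ∀ b ∈ fiber col q.2.1,
      ∀ c ∈ fiber col q.2.2.1, ∀ d ∈ fiber col q.2.2.2,
        SegCross (f a) (f b) (f c) (f d)) :
    (∑ q ∈ T, eW w (fiber col q.1) (fiber col q.2.1) *
        eW w (fiber col q.2.2.1) (fiber col q.2.2.2)) ≤ crossCount w f ∧
    (crossCount w f = wrcr (Fin n) w →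
      (∑ q ∈ T, eW w (fiber col q.1) (fiber col q.2.1) *
          eW w (fiber col q.2.2.1) (fiber col q.2.2.2)) ≤ wrcr (Fin n) w) := by
  classical
  have hwnn : ∀ u v, 0 ≤ w u v := fun u v => (hw u v).1
  have htnn : ∀ a b c d, 0 ≤ ttX w f a b c d := by
    intro a b c d
    unfold ttX
    split
    · exact mul_nonneg (hwnn _ _) (hwnn _ _)
    · exact le_refl 0
  have hfib : ∀ {i j : Fin K}, i ≠ j → ∀ {a : Fin n}, a ∈ fiber col i →
      ∀ {b : Fin n}, b ∈ fiber col j → a ≠ b := by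
    intro i j hij a ha b hb hab
    simp only [fiber, Finset.mem_filter] at ha hb
    exact hij (by rw [← ha.2, ← hb.2, hab])
  have eWcomm : ∀ A B : Finset (Fin n), eW w A B = eW w B A := by
    intro A B
    rw [eW, eW, Finset.sum_comm]
    exact Finset.sum_congr rfl fun b _ => Finset.sum_congr rfl fun a _ => hsymm a b
  set TT : Fin K × Fin K × Fin K × Fin K → ℝ := fun p =>
    ∑ a ∈ fiber col p.1, ∑ b ∈ fiber col p.2.1, ∑ c ∈ fiber col p.2.2.1,
      ∑ d ∈ fiber col p.2.2.2, ttX w f a b c d with hTT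
  have hTTnn : ∀ p, 0 ≤ TT p := fun p =>
    Finset.sum_nonneg fun a _ => Finset.sum_nonneg fun b _ => Finset.sum_nonneg fun c _ =>
      Finset.sum_nonneg fun d _ => htnn a b c d
  have Tval : ∀ i j k l : Fin K, i ≠ j → i ≠ k → i ≠ l → j ≠ k → j ≠ l → k ≠ l →
      (∀ a ∈ fiber col i, ∀ b ∈ fiber col j, ∀ c ∈ fiber col k, ∀ d ∈ fiber col l,
        SegCross (f a) (f b) (f c) (f d)) →
      TT (i, j, k, l) = eW w (fiber col i) (fiber col j) * eW w (fiber col k) (fiber col l) := by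
    intro i j k l hij hik hil hjk hjl hkl hcr
    have hval : TT (i,j,k,l) = ∑ a ∈ fiber col i, ∑ b ∈ fiber col j, ∑ c ∈ fiber col k,
        ∑ d ∈ fiber col l, w a b * w c d := by
      refine Finset.sum_congr rfl fun a ha => Finset.sum_congr rfl fun b hb =>
        Finset.sum_congr rfl fun c hc => Finset.sum_congr rfl fun d hd => ?_
      unfold ttX
      rw [if_pos]
      exact ⟨hfib hij ha hb, hfib hik ha hc, hfib hil ha hd, hfib hjk hb hc,
        hfib hjl hb hd, hfib hkl hc hd, hcr a ha b hb c hc d hd⟩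
    rw [hval, eW, eW, Finset.sum_mul_sum]
    refine Finset.sum_congr rfl fun a _ => ?_
    calc (∑ b ∈ fiber col j, ∑ c ∈ fiber col k, ∑ d ∈ fiber col l, w a b * w c d)
        = ∑ c ∈ fiber col k, ∑ b ∈ fiber col j, ∑ d ∈ fiber col l, w a b * w c d :=
          Finset.sum_comm
      _ = ∑ c ∈ fiber col k, (∑ b ∈ fiber col j, w a b) * ∑ d ∈ fiber col l, w c d :=
          Finset.sum_congr rfl fun c _ => (Finset.sum_mul_sum _ _ _ _).symm
  have key : ∀ q ∈ T, ∑ p ∈ orbQ q, TT p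
      = 8 * (eW w (fiber col q.1) (fiber col q.2.1) *
          eW w (fiber col q.2.2.1) (fiber col q.2.2.2)) := by
    intro q hq
    obtain ⟨hij, hik, hil, hjk, hjl, hkl⟩ := hdist q hq
    have hC := hcross q hq
    obtain ⟨i, j, k, l⟩ := q
    dsimp only at hij hik hil hjk hjl hkl hC ⊢
    rw [orbQ_sum TT i j k l hij hik hil hjk hjl hkl]
    rw [Tval i j k l hij hik hil hjk hjl hkl
          (fun a ha b hb c hc d hd => hC a ha b hb c hc d hd),
        Tval j i k l hij.symm hjk hjl hik hil hkl
          (fun a ha b hb c hc d hd => (hC b hb a ha c hc d hd).swap₁),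
        Tval i j l k hij hil hik hjl hjk hkl.symm
          (fun a ha b hb c hc d hd => (hC a ha b hb d hd c hc).swap₂),
        Tval j i l k hij.symm hjl hjk hil hik hkl.symm
          (fun a ha b hb c hc d hd => ((hC b hb a ha d hd c hc).swap₁).swap₂),
        Tval k l i j hkl hik.symm hjk.symm hil.symm hjl.symm hij
          (fun a ha b hb c hc d hd => (hC c hc d hd a ha b hb).comm),
        Tval l k i j hkl.symm hil.symm hjl.symm hik.symm hjk.symm hij
          (fun a ha b hb c hc d hd => ((hC c hc d hd b hb a ha).comm).swap₁),
        Tval k l j i hkl hjk.symm hik.symm hjl.symm hil.symm hij.symm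
          (fun a ha b hb c hc d hd => ((hC d hd c hc a ha b hb).comm).swap₂),
        Tval l k j i hkl.symm hjl.symm hil.symm hjk.symm hik.symm hij.symm
          (fun a ha b hb c hc d hd => (((hC d hd c hc b hb a ha).comm).swap₁).swap₂)]
    rw [eWcomm (fiber col j) (fiber col i), eWcomm (fiber col l) (fiber col k)]
    ring
  have hdisj : (T : Set (Fin K × Fin K × Fin K × Fin K)).PairwiseDisjoint orbQ := by
    intro q hq q' hq' hne
    refine Finset.disjoint_left.2 fun p hp hp' => ?_
    exact hsets q hq q' hq' hne ((orbQ_sets q p hp).symm.trans (orbQ_sets q' p hp'))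
  have hsplit : ∀ g : Fin n → ℝ, ∑ i : Fin K, ∑ a ∈ fiber col i, g a = ∑ a, g a := by
    intro g
    exact Finset.sum_fiberwise_of_maps_to (fun x _ => Finset.mem_univ (col x)) g
  have interchange : (∑ a, ∑ b, ∑ c, ∑ d, ttX w f a b c d)
      = ∑ i, ∑ j, ∑ k, ∑ l, TT (i, j, k, l) := by
    rw [← hsplit fun a => ∑ b, ∑ c, ∑ d, ttX w f a b c d]
    refine Finset.sum_congr rfl fun i _ => ?_
    calc ∑ a ∈ fiber col i, ∑ b, ∑ c, ∑ d, ttX w f a b c d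
        = ∑ a ∈ fiber col i, ∑ j, ∑ b ∈ fiber col j, ∑ c, ∑ d, ttX w f a b c d :=
          Finset.sum_congr rfl fun a _ => (hsplit _).symm
      _ = ∑ j, ∑ a ∈ fiber col i, ∑ b ∈ fiber col j, ∑ c, ∑ d, ttX w f a b c d :=
          Finset.sum_comm
      _ = ∑ j, ∑ a ∈ fiber col i, ∑ b ∈ fiber col j, ∑ k, ∑ c ∈ fiber col k, ∑ d,
            ttX w f a b c d :=
          Finset.sum_congr rfl fun j _ => Finset.sum_congr rfl fun a _ =>
            Finset.sum_congr rfl fun b _ => (hsplit _).symm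
      _ = ∑ j, ∑ a ∈ fiber col i, ∑ k, ∑ b ∈ fiber col j, ∑ c ∈ fiber col k, ∑ d,
            ttX w f a b c d :=
          Finset.sum_congr rfl fun j _ => Finset.sum_congr rfl fun a _ => Finset.sum_comm
      _ = ∑ j, ∑ k, ∑ a ∈ fiber col i, ∑ b ∈ fiber col j, ∑ c ∈ fiber col k, ∑ d,
            ttX w f a b c d :=
          Finset.sum_congr rfl fun j _ => Finset.sum_comm
      _ = ∑ j, ∑ k, ∑ a ∈ fiber col i, ∑ b ∈ fiber col j, ∑ c ∈ fiber col k, ∑ l,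
            ∑ d ∈ fiber col l, ttX w f a b c d :=
          Finset.sum_congr rfl fun j _ => Finset.sum_congr rfl fun k _ =>
            Finset.sum_congr rfl fun a _ => Finset.sum_congr rfl fun b _ =>
              Finset.sum_congr rfl fun c _ => (hsplit _).symm
      _ = ∑ j, ∑ k, ∑ a ∈ fiber col i, ∑ b ∈ fiber col j, ∑ l, ∑ c ∈ fiber col k,
            ∑ d ∈ fiber col l, ttX w f a b c d :=
          Finset.sum_congr rfl fun j _ => Finset.sum_congr rfl fun k _ =>
            Finset.sum_congr rfl fun a _ => Finset.sum_congr rfl fun b _ => Finset.sum_comm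
      _ = ∑ j, ∑ k, ∑ a ∈ fiber col i, ∑ l, ∑ b ∈ fiber col j, ∑ c ∈ fiber col k,
            ∑ d ∈ fiber col l, ttX w f a b c d :=
          Finset.sum_congr rfl fun j _ => Finset.sum_congr rfl fun k _ =>
            Finset.sum_congr rfl fun a _ => Finset.sum_comm
      _ = ∑ j, ∑ k, ∑ l, ∑ a ∈ fiber col i, ∑ b ∈ fiber col j, ∑ c ∈ fiber col k,
            ∑ d ∈ fiber col l, ttX w f a b c d :=
          Finset.sum_congr rfl fun j _ => Finset.sum_congr rfl fun k _ => Finset.sum_comm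
      _ = ∑ j, ∑ k, ∑ l, TT (i, j, k, l) := rfl
  have main : (∑ q ∈ T, eW w (fiber col q.1) (fiber col q.2.1) *
      eW w (fiber col q.2.2.1) (fiber col q.2.2.2)) ≤ crossCount w f := by
    rw [crossCount_eq_ttX, le_div_iff₀ (by norm_num : (0:ℝ) < 8), interchange]
    have h1 : (∑ q ∈ T, eW w (fiber col q.1) (fiber col q.2.1) *
        eW w (fiber col q.2.2.1) (fiber col q.2.2.2)) * 8
        = ∑ q ∈ T, ∑ p ∈ orbQ q, TT p := by
      rw [Finset.sum_mul]
      exact Finset.sum_congr rfl fun q hq => by rw [key q hq]; ring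
    rw [h1, ← Finset.sum_biUnion hdisj]
    have h2 : ∑ p ∈ T.biUnion orbQ, TT p ≤ ∑ p : Fin K × Fin K × Fin K × Fin K, TT p :=
      Finset.sum_le_sum_of_subset_of_nonneg (Finset.subset_univ _) (fun p _ _ => hTTnn p)
    refine h2.trans_eq ?_
    rw [Fintype.sum_prod_type]
    refine Finset.sum_congr rfl fun i _ => ?_
    rw [Fintype.sum_prod_type]
    refine Finset.sum_congr rfl fun j _ => ?_
    rw [Fintype.sum_prod_type]
  exact ⟨main, fun h => h ▸ main⟩
end
end

section
/- Let G be an edge-weighted graph on K vertices with weights in [0,1] and let G[m] be its m-fold blow-up. In the drawing of G[m] obtained by clustering each blow-up class in a tiny disk around the corresponding vertex of an optimal drawing of G, the weighted number of crossings is at most m^4·cr̄(G) + K·C(m,2)·C(Km,2), and K·C(m,2)·C(Km,2) ≤ K^3 m^4. -/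
open Finset
open scoped Classical BigOperators

noncomputable section

lemma orient_affine (r s p q : ℝ × ℝ) (a b : ℝ) (hab : a + b = 1) :
    orient r s (a • p + b • q) = a * orient r s p + b * orient r s q := by
  have hb : b = 1 - a := by linarith
  subst hb
  simp [orient, Prod.smul_def, smul_eq_mul]
  ring

lemma orient_self (p q : ℝ × ℝ) (a b : ℝ) (hab : a + b = 1) :
    orient p q (a • p + b • q) = 0 := by
  have hb : b = 1 - a := by linarith
  subst hb
  simp [orient, Prod.smul_def, smul_eq_mul]
  ring

lemma segCross_sign {p q r s : ℝ × ℝ} (h : SegCross p q r s)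
    (hA : orient p q r ≠ 0) (hB : orient p q s ≠ 0) :
    orient p q r * orient p q s < 0 := by
  obtain ⟨x, hx1, hx2⟩ := h
  obtain ⟨a, b, ha, hb, hab, rfl⟩ := hx1
  obtain ⟨a', b', ha', hb', hab', heq⟩ := hx2
  have h0 : orient p q (a • p + b • q) = 0 := orient_self p q a b hab
  have h1 : orient p q (a' • r + b' • s) = a' * orient p q r + b' * orient p q s :=
    orient_affine p q r s a' b' hab'
  rw [heq, h0] at h1
  rcases hA.lt_or_gt with h2 | h2 <;> rcases hB.lt_or_gt with h3 | h3 <;> nlinarith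

lemma segCross_comm {p q r s : ℝ × ℝ} : SegCross p q r s ↔ SegCross r s p q := by
  unfold SegCross; rw [Set.inter_comm]

lemma segCross_swap_left {p q r s : ℝ × ℝ} : SegCross p q r s ↔ SegCross q p r s := by
  unfold SegCross; rw [openSegment_symm]

lemma segCross_swap_right {p q r s : ℝ × ℝ} : SegCross p q r s ↔ SegCross p q s r := by
  unfold SegCross; rw [openSegment_symm (𝕜 := ℝ) r s]

lemma not_both_cross {a b c d : ℝ × ℝ}
    (h1 : orient a b c ≠ 0) (h2 : orient a b d ≠ 0)
    (h3 : orient a c d ≠ 0) (h4 : orient b c d ≠ 0)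
    (hc1 : SegCross a b c d) (hc2 : SegCross a d c b) : False := by
  have q1 : orient c d a = orient a c d := by unfold orient; ring
  have q2 : orient c d b = orient b c d := by unfold orient; ring
  have q3 : orient a d c = -orient a c d := by unfold orient; ring
  have q4 : orient a d b = -orient a b d := by unfold orient; ring
  have q5 : orient c b a = -orient a b c := by unfold orient; ring
  have q6 : orient c b d = -orient b c d := by unfold orient; ring
  have hq : orient b c d = orient a b c - orient a b d + orient a c d := by
    unfold orient; ring
  have e1 : orient a b c * orient a b d < 0 := segCross_sign hc1 h1 h2
  have e2 : orient c d a * orient c d b < 0 :=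
    segCross_sign (segCross_comm.mp hc1) (by rw [q1]; exact h3) (by rw [q2]; exact h4)
  rw [q1, q2] at e2
  have e3 : orient a d c * orient a d b < 0 :=
    segCross_sign hc2 (by rw [q3]; simpa using h3) (by rw [q4]; simpa using h2)
  rw [q3, q4] at e3
  have e3' : orient a c d * orient a b d < 0 := by nlinarith [e3]
  have e4 : orient c b a * orient c b d < 0 :=
    segCross_sign (segCross_comm.mp hc2) (by rw [q5]; simpa using h1)
      (by rw [q6]; simpa using h4)
  rw [q5, q6] at e4
  have e4' : orient a b c * orient b c d < 0 := by nlinarith [e4]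
  rcases h1.lt_or_gt with hA | hA
  · have hB : 0 < orient a b d := by nlinarith
    have hC : 0 > orient a c d := by nlinarith
    have hD : 0 < orient b c d := by nlinarith
    linarith
  · have hB : 0 > orient a b d := by nlinarith
    have hC : 0 < orient a c d := by nlinarith
    have hD : 0 > orient b c d := by nlinarith
    linarith

lemma no_second_cross {α : Type*} {g : α → ℝ × ℝ} (hggp : GenPos g) {p x q y : α}
    (h1 : p ≠ x) (h2 : p ≠ q) (h3 : p ≠ y) (h4 : x ≠ q) (h5 : x ≠ y) (h6 : q ≠ y)
    (hc1 : SegCross (g p) (g x) (g q) (g y)) (hc2 : SegCross (g p) (g y) (g q) (g x)) :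
    False :=
  not_both_cross (hggp p x q h1 h2 h4) (hggp p x y h1 h3 h5) (hggp p q y h2 h3 h6)
    (hggp x q y h4 h5 h6) hc1 hc2

lemma pair_eq' {α : Type*} [DecidableEq α] {a b u v : α} (hab : a ≠ b)
    (h : ({a, b} : Finset α) = {u, v}) : (a = u ∧ b = v) ∨ (a = v ∧ b = u) := by
  have ha : a ∈ ({u, v} : Finset α) := h ▸ by simp
  have hb : b ∈ ({u, v} : Finset α) := h ▸ by simp
  have hu : u ∈ ({a, b} : Finset α) := h.symm ▸ by simp
  have hv : v ∈ ({a, b} : Finset α) := h.symm ▸ by simp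
  simp only [Finset.mem_insert, Finset.mem_singleton] at ha hb hu hv
  rcases ha with rfl | rfl <;> rcases hb with rfl | rfl <;> tauto

def Bad {K m : ℕ} (g : Fin K × Fin m → ℝ × ℝ)
    (t : (Fin K × Fin m) × (Fin K × Fin m) × (Fin K × Fin m) × (Fin K × Fin m)) : Prop :=
  t.1 ≠ t.2.1 ∧ t.1 ≠ t.2.2.1 ∧ t.1 ≠ t.2.2.2 ∧ t.2.1 ≠ t.2.2.1 ∧ t.2.1 ≠ t.2.2.2 ∧
    t.2.2.1 ≠ t.2.2.2 ∧ SegCross (g t.1) (g t.2.1) (g t.2.2.1) (g t.2.2.2) ∧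
    t.1.1 ≠ t.2.1.1 ∧ t.2.2.1.1 ≠ t.2.2.2.1 ∧
    (t.1.1 = t.2.2.1.1 ∨ t.1.1 = t.2.2.2.1 ∨ t.2.1.1 = t.2.2.1.1 ∨ t.2.1.1 = t.2.2.2.1)

def phiMap {K m : ℕ}
    (t : (Fin K × Fin m) × (Fin K × Fin m) × (Fin K × Fin m) × (Fin K × Fin m)) :
    Fin K × Finset (Fin m) × Finset (Fin K × Fin m) :=
  if t.1.1 = t.2.2.1.1 then (t.1.1, {t.1.2, t.2.2.1.2}, {t.2.1, t.2.2.2})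
  else if t.1.1 = t.2.2.2.1 then (t.1.1, {t.1.2, t.2.2.2.2}, {t.2.1, t.2.2.1})
  else if t.2.1.1 = t.2.2.1.1 then (t.2.1.1, {t.2.1.2, t.2.2.1.2}, {t.1, t.2.2.2})
  else (t.2.1.1, {t.2.1.2, t.2.2.2.2}, {t.1, t.2.2.1})

set_option maxHeartbeats 1000000 in
lemma bad_card (K m : ℕ) (g : Fin K × Fin m → ℝ × ℝ) (hggp : GenPos g) :
    ((Finset.univ :
        Finset ((Fin K × Fin m) × (Fin K × Fin m) × (Fin K × Fin m) × (Fin K × Fin m))).filter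
        (Bad g)).card ≤ 8 * (K * Nat.choose m 2 * Nat.choose (K * m) 2) := by
  classical
  set s := ((Finset.univ :
      Finset ((Fin K × Fin m) × (Fin K × Fin m) × (Fin K × Fin m) × (Fin K × Fin m))).filter
      (Bad g)) with hs
  set T := (Finset.univ : Finset (Fin K)) ×ˢ
      ((Finset.univ : Finset (Fin m)).powersetCard 2) ×ˢ
      ((Finset.univ : Finset (Fin K × Fin m)).powersetCard 2) with hT
  have hTcard : T.card = K * Nat.choose m 2 * Nat.choose (K * m) 2 := by
    rw [hT, Finset.card_product, Finset.card_product]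
    simp [Finset.card_powersetCard, Fintype.card_prod, mul_assoc]
  have Hf : ∀ t ∈ s, phiMap t ∈ T := by
    rintro ⟨a, b, c, d⟩ ht
    obtain ⟨hab, hac, had, hbc, hbd, hcd, hcr, hab1, hcd1, hor⟩ := (Finset.mem_filter.mp ht).2
    dsimp only at hab hac had hbc hbd hcd hcr hab1 hcd1 hor
    rw [hT]
    unfold phiMap
    dsimp only
    split_ifs with h1 h2 h3 <;>
      simp only [Finset.mem_product, Finset.mem_powersetCard, Finset.mem_univ, true_and] <;>
      refine ⟨⟨fun z _ => Finset.mem_univ z, ?_⟩, fun z _ => Finset.mem_univ z, ?_⟩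
    · exact Finset.card_pair (fun h => hac (Prod.ext_iff.mpr ⟨h1, h⟩))
    · exact Finset.card_pair hbd
    · exact Finset.card_pair (fun h => had (Prod.ext_iff.mpr ⟨h2, h⟩))
    · exact Finset.card_pair hbc
    · exact Finset.card_pair (fun h => hbc (Prod.ext_iff.mpr ⟨h3, h⟩))
    · exact Finset.card_pair had
    · have h4 : b.1 = d.1 := by tauto
      exact Finset.card_pair (fun h => hbd (Prod.ext_iff.mpr ⟨h4, h⟩))
    · exact Finset.card_pair hac
  have hfib : ∀ v ∈ T, (s.filter (fun t => phiMap t = v)).card ≤ 8 := by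
    rintro ⟨i, P, Q⟩ hv
    rw [hT] at hv
    simp only [Finset.mem_product, Finset.mem_powersetCard, Finset.mem_univ, true_and] at hv
    obtain ⟨⟨-, hPc⟩, -, hQc⟩ := hv
    obtain ⟨u, u', huv, rfl⟩ := Finset.card_eq_two.mp hPc
    obtain ⟨x, y, hxy, rfl⟩ := Finset.card_eq_two.mp hQc
    have hsub : (s.filter (fun t => phiMap t = (i, {u, u'}, {x, y}))) ⊆
        (if SegCross (g (i, u)) (g x) (g (i, u')) (g y)
          then [((i,u),x,(i,u'),y), ((i,u'),y,(i,u),x), ((i,u),x,y,(i,u')), ((i,u'),y,x,(i,u)),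
                (x,(i,u),(i,u'),y), (y,(i,u'),(i,u),x), (x,(i,u),y,(i,u')), (y,(i,u'),x,(i,u))]
          else [((i,u),y,(i,u'),x), ((i,u'),x,(i,u),y), ((i,u),y,x,(i,u')), ((i,u'),x,y,(i,u)),
                (y,(i,u),(i,u'),x), (x,(i,u'),(i,u),y), (y,(i,u),x,(i,u')),
                (x,(i,u'),y,(i,u))]).toFinset := by
      rintro ⟨a, b, c, d⟩ ht
      rw [Finset.mem_filter] at ht
      obtain ⟨hts, hphit⟩ := ht
      obtain ⟨hab, hac, had, hbc, hbd, hcd, hcr, hab1, hcd1, hor⟩ := (Finset.mem_filter.mp hts).2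
      dsimp only at hab hac had hbc hbd hcd hcr hab1 hcd1 hor
      unfold phiMap at hphit
      dsimp only at hphit
      split_ifs at hphit with h1 h2 h3 <;>
        rw [Prod.mk.injEq, Prod.mk.injEq] at hphit <;>
        obtain ⟨hi1, hPe, hQe⟩ := hphit
      · -- case a.1 = c.1
        have hc1i : c.1 = i := by rw [← h1]; exact hi1
        rcases pair_eq' (fun h => hac (Prod.ext_iff.mpr ⟨h1, h⟩)) hPe with ⟨e1, e2⟩ | ⟨e1, e2⟩ <;>
          rcases pair_eq' hbd hQe with ⟨e3, e4⟩ | ⟨e3, e4⟩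
        · have ha : a = (i, u) := Prod.ext_iff.mpr ⟨hi1, e1⟩
          have hc : c = (i, u') := Prod.ext_iff.mpr ⟨hc1i, e2⟩
          subst ha hc e3 e4
          rw [if_pos hcr]
          exact List.mem_toFinset.mpr (.head _)
        · have ha : a = (i, u) := Prod.ext_iff.mpr ⟨hi1, e1⟩
          have hc : c = (i, u') := Prod.ext_iff.mpr ⟨hc1i, e2⟩
          subst ha hc e3 e4
          rw [if_neg (fun hp => no_second_cross hggp had hac hab hcd.symm hbd.symm hbc.symm
            hp hcr)]
          exact List.mem_toFinset.mpr (.head _)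
        · have ha : a = (i, u') := Prod.ext_iff.mpr ⟨hi1, e1⟩
          have hc : c = (i, u) := Prod.ext_iff.mpr ⟨hc1i, e2⟩
          subst ha hc e3 e4
          rw [if_neg (fun hp => no_second_cross hggp hbc.symm hac.symm hcd hab.symm hbd had
            hp (segCross_comm.mp hcr))]
          exact List.mem_toFinset.mpr (.tail _ (.head _))
        · have ha : a = (i, u') := Prod.ext_iff.mpr ⟨hi1, e1⟩
          have hc : c = (i, u) := Prod.ext_iff.mpr ⟨hc1i, e2⟩
          subst ha hc e3 e4
          rw [if_pos (segCross_comm.mp hcr)]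
          exact List.mem_toFinset.mpr (.tail _ (.head _))
      · -- case a.1 = d.1
        have hd1i : d.1 = i := by rw [← h2]; exact hi1
        rcases pair_eq' (fun h => had (Prod.ext_iff.mpr ⟨h2, h⟩)) hPe with ⟨e1, e2⟩ | ⟨e1, e2⟩ <;>
          rcases pair_eq' hbc hQe with ⟨e3, e4⟩ | ⟨e3, e4⟩
        · have ha : a = (i, u) := Prod.ext_iff.mpr ⟨hi1, e1⟩
          have hd : d = (i, u') := Prod.ext_iff.mpr ⟨hd1i, e2⟩
          subst ha hd e3 e4
          rw [if_pos (segCross_swap_right.mp hcr)]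
          exact List.mem_toFinset.mpr (.tail _ (.tail _ (.head _)))
        · have ha : a = (i, u) := Prod.ext_iff.mpr ⟨hi1, e1⟩
          have hd : d = (i, u') := Prod.ext_iff.mpr ⟨hd1i, e2⟩
          subst ha hd e3 e4
          rw [if_neg (fun hp => no_second_cross hggp hac had hab hcd hbc.symm hbd.symm
            hp (segCross_swap_right.mp hcr))]
          exact List.mem_toFinset.mpr (.tail _ (.tail _ (.head _)))
        · have ha : a = (i, u') := Prod.ext_iff.mpr ⟨hi1, e1⟩
          have hd : d = (i, u) := Prod.ext_iff.mpr ⟨hd1i, e2⟩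
          subst ha hd e3 e4
          rw [if_neg (fun hp => no_second_cross hggp hbd.symm had.symm hcd.symm hab.symm hbc hac
            hp (segCross_comm.mp (segCross_swap_right.mp hcr)))]
          exact List.mem_toFinset.mpr (.tail _ (.tail _ (.tail _ (.head _))))
        · have ha : a = (i, u') := Prod.ext_iff.mpr ⟨hi1, e1⟩
          have hd : d = (i, u) := Prod.ext_iff.mpr ⟨hd1i, e2⟩
          subst ha hd e3 e4
          rw [if_pos (segCross_comm.mp (segCross_swap_right.mp hcr))]
          exact List.mem_toFinset.mpr (.tail _ (.tail _ (.tail _ (.head _))))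
      · -- case b.1 = c.1
        have hc1i : c.1 = i := by rw [← h3]; exact hi1
        rcases pair_eq' (fun h => hbc (Prod.ext_iff.mpr ⟨h3, h⟩)) hPe with ⟨e1, e2⟩ | ⟨e1, e2⟩ <;>
          rcases pair_eq' had hQe with ⟨e3, e4⟩ | ⟨e3, e4⟩
        · have hb : b = (i, u) := Prod.ext_iff.mpr ⟨hi1, e1⟩
          have hc : c = (i, u') := Prod.ext_iff.mpr ⟨hc1i, e2⟩
          subst hb hc e3 e4
          rw [if_pos (segCross_swap_left.mp hcr)]
          exact List.mem_toFinset.mpr (.tail _ (.tail _ (.tail _ (.tail _ (.head _)))))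
        · have hb : b = (i, u) := Prod.ext_iff.mpr ⟨hi1, e1⟩
          have hc : c = (i, u') := Prod.ext_iff.mpr ⟨hc1i, e2⟩
          subst hb hc e3 e4
          rw [if_neg (fun hp => no_second_cross hggp hbd hbc hab.symm hcd.symm had.symm hac.symm
            hp (segCross_swap_left.mp hcr))]
          exact List.mem_toFinset.mpr (.tail _ (.tail _ (.tail _ (.tail _ (.head _)))))
        · have hb : b = (i, u') := Prod.ext_iff.mpr ⟨hi1, e1⟩
          have hc : c = (i, u) := Prod.ext_iff.mpr ⟨hc1i, e2⟩
          subst hb hc e3 e4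
          rw [if_neg (fun hp => no_second_cross hggp hac.symm hbc.symm hcd hab had hbd
            hp (segCross_comm.mp (segCross_swap_left.mp hcr)))]
          exact List.mem_toFinset.mpr (.tail _ (.tail _ (.tail _ (.tail _ (.tail _ (.head _))))))
        · have hb : b = (i, u') := Prod.ext_iff.mpr ⟨hi1, e1⟩
          have hc : c = (i, u) := Prod.ext_iff.mpr ⟨hc1i, e2⟩
          subst hb hc e3 e4
          rw [if_pos (segCross_comm.mp (segCross_swap_left.mp hcr))]
          exact List.mem_toFinset.mpr (.tail _ (.tail _ (.tail _ (.tail _ (.tail _ (.head _))))))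
      · -- case b.1 = d.1
        have h4 : b.1 = d.1 := by tauto
        have hd1i : d.1 = i := by rw [← h4]; exact hi1
        rcases pair_eq' (fun h => hbd (Prod.ext_iff.mpr ⟨h4, h⟩)) hPe with ⟨e1, e2⟩ | ⟨e1, e2⟩ <;>
          rcases pair_eq' hac hQe with ⟨e3, e4⟩ | ⟨e3, e4⟩
        · have hb : b = (i, u) := Prod.ext_iff.mpr ⟨hi1, e1⟩
          have hd : d = (i, u') := Prod.ext_iff.mpr ⟨hd1i, e2⟩
          subst hb hd e3 e4
          rw [if_pos (segCross_swap_right.mp (segCross_swap_left.mp hcr))]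
          exact List.mem_toFinset.mpr (.tail _ (.tail _ (.tail _ (.tail _ (.tail _ (.tail _ (.head _)))))))
        · have hb : b = (i, u) := Prod.ext_iff.mpr ⟨hi1, e1⟩
          have hd : d = (i, u') := Prod.ext_iff.mpr ⟨hd1i, e2⟩
          subst hb hd e3 e4
          rw [if_neg (fun hp => no_second_cross hggp hbc hbd hab.symm hcd hac.symm had.symm
            hp (segCross_swap_right.mp (segCross_swap_left.mp hcr)))]
          exact List.mem_toFinset.mpr (.tail _ (.tail _ (.tail _ (.tail _ (.tail _ (.tail _ (.head _)))))))
        · have hb : b = (i, u') := Prod.ext_iff.mpr ⟨hi1, e1⟩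
          have hd : d = (i, u) := Prod.ext_iff.mpr ⟨hd1i, e2⟩
          subst hb hd e3 e4
          rw [if_neg (fun hp => no_second_cross hggp had.symm hbd.symm hcd.symm hab hac hbc
            hp (segCross_comm.mp (segCross_swap_right.mp (segCross_swap_left.mp hcr))))]
          exact List.mem_toFinset.mpr (.tail _ (.tail _ (.tail _ (.tail _ (.tail _ (.tail _ (.tail _ (.head _))))))))
        · have hb : b = (i, u') := Prod.ext_iff.mpr ⟨hi1, e1⟩
          have hd : d = (i, u) := Prod.ext_iff.mpr ⟨hd1i, e2⟩
          subst hb hd e3 e4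
          rw [if_pos (segCross_comm.mp (segCross_swap_right.mp (segCross_swap_left.mp hcr)))]
          exact List.mem_toFinset.mpr (.tail _ (.tail _ (.tail _ (.tail _ (.tail _ (.tail _ (.tail _ (.head _))))))))
    refine le_trans (Finset.card_le_card hsub) (le_trans (List.toFinset_card_le _) ?_)
    split_ifs <;> simp
  calc s.card ≤ 8 * T.card := Finset.card_le_mul_card_image_of_maps_to Hf 8 hfib
    _ = _ := by rw [hTcard]

lemma choose_two_le_sq (n : ℕ) : n.choose 2 ≤ n ^ 2 := by
  rw [Nat.choose_two_right]
  calc n * (n - 1) / 2 ≤ n * (n - 1) := Nat.div_le_self _ _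
    _ ≤ n * n := Nat.mul_le_mul_left n (Nat.sub_le n 1)
    _ = n ^ 2 := (sq n).symm


lemma ite_irrel {α : Sort*} (P : Prop) (i1 i2 : Decidable P) (x y : α) :
    @ite _ P i1 x y = @ite _ P i2 x y := by
  cases Subsingleton.elim i1 i2; rfl

lemma sum_quad {α : Type*} [Fintype α] (f : α × α × α × α → ℝ) :
    ∑ t : α × α × α × α, f t = ∑ a : α, ∑ b : α, ∑ c : α, ∑ d : α, f (a, b, c, d) := by
  rw [Fintype.sum_prod_type]
  simp_rw [Fintype.sum_prod_type]

set_option maxHeartbeats 2000000 in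

set_option maxHeartbeats 2000000 in
/-- In the clustered drawing of the blow-up `G[m]` (each class drawn in a tiny disk around
the corresponding vertex of an optimal drawing of `G`, so crossings between four distinct
classes match those of the optimal drawing), the weighted number of crossings is at most
`m^4 cr̄(G) + K·C(m,2)·C(Km,2)`, and `K·C(m,2)·C(Km,2) ≤ K^3 m^4`. -/
theorem stmt_9 (K m : ℕ) (w : Fin K → Fin K → ℝ)
    (hsymm : ∀ i j, w i j = w j i) (hdiag : ∀ i, w i i = 0)
    (hw : ∀ i j, 0 ≤ w i j ∧ w i j ≤ 1)
    (F : Fin K → ℝ × ℝ) (hFinj : Function.Injective F) (hFgp : GenPos F)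
    (hopt : crossCount w F = wrcr (Fin K) w)
    (g : Fin K × Fin m → ℝ × ℝ) (hginj : Function.Injective g) (hggp : GenPos g)
    (hsame : ∀ i j k l : Fin K, i ≠ j → i ≠ k → i ≠ l → j ≠ k → j ≠ l → k ≠ l →
      ∀ a b c d : Fin m,
        (SegCross (g (i, a)) (g (j, b)) (g (k, c)) (g (l, d)) ↔
          SegCross (F i) (F j) (F k) (F l))) :
    crossCount (fun u v : Fin K × Fin m => w u.1 v.1) g
      ≤ (m : ℝ) ^ 4 * wrcr (Fin K) w
        + ((K * Nat.choose m 2 * Nat.choose (K * m) 2 : ℕ) : ℝ) ∧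
    ((K * Nat.choose m 2 * Nat.choose (K * m) 2 : ℕ) : ℝ)
      ≤ (K : ℝ) ^ 3 * (m : ℝ) ^ 4 := by
  classical
  constructor
  · -- main bound
    have htFnn : ∀ i j k l : Fin K,
        (0 : ℝ) ≤ if i ≠ j ∧ i ≠ k ∧ i ≠ l ∧ j ≠ k ∧ j ≠ l ∧ k ≠ l ∧
          SegCross (F i) (F j) (F k) (F l) then w i j * w k l else 0 := by
      intro i j k l
      split_ifs
      · exact mul_nonneg (hw _ _).1 (hw _ _).1
      · exact le_refl 0
    -- pointwise bound
    have hpoint : ∀ a b c d : Fin K × Fin m,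
        (if a ≠ b ∧ a ≠ c ∧ a ≠ d ∧ b ≠ c ∧ b ≠ d ∧ c ≠ d ∧
            SegCross (g a) (g b) (g c) (g d) then w a.1 b.1 * w c.1 d.1 else 0)
          ≤ (if a.1 ≠ b.1 ∧ a.1 ≠ c.1 ∧ a.1 ≠ d.1 ∧ b.1 ≠ c.1 ∧ b.1 ≠ d.1 ∧ c.1 ≠ d.1 ∧
              SegCross (F a.1) (F b.1) (F c.1) (F d.1) then w a.1 b.1 * w c.1 d.1 else 0)
            + (if Bad g (a, b, c, d) then (1 : ℝ) else 0) := by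
      intro a b c d
      have ht2nn : (0 : ℝ) ≤ if Bad g (a, b, c, d) then (1 : ℝ) else 0 := by positivity
      by_cases hcond : a ≠ b ∧ a ≠ c ∧ a ≠ d ∧ b ≠ c ∧ b ≠ d ∧ c ≠ d ∧
          SegCross (g a) (g b) (g c) (g d)
      swap
      · rw [if_neg hcond]
        exact add_nonneg (htFnn _ _ _ _) ht2nn
      obtain ⟨hab, hac, had, hbc, hbd, hcd, hcr⟩ := hcond
      rw [if_pos ⟨hab, hac, had, hbc, hbd, hcd, hcr⟩]
      by_cases hab1 : a.1 = b.1
      · have hz : w a.1 b.1 * w c.1 d.1 = 0 := by rw [hab1, hdiag, zero_mul]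
        exact le_trans (le_of_eq hz) (add_nonneg (htFnn _ _ _ _) ht2nn)
      by_cases hcd1 : c.1 = d.1
      · have hz : w a.1 b.1 * w c.1 d.1 = 0 := by rw [hcd1, hdiag, mul_zero]
        exact le_trans (le_of_eq hz) (add_nonneg (htFnn _ _ _ _) ht2nn)
      by_cases hclass : a.1 ≠ c.1 ∧ a.1 ≠ d.1 ∧ b.1 ≠ c.1 ∧ b.1 ≠ d.1
      · obtain ⟨h1, h2, h3, h4⟩ := hclass
        have hiff := hsame a.1 b.1 c.1 d.1 hab1 h1 h2 h3 h4 hcd1 a.2 b.2 c.2 d.2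
        simp only [Prod.mk.eta] at hiff
        have hFcr : SegCross (F a.1) (F b.1) (F c.1) (F d.1) := hiff.mp hcr
        rw [if_pos ⟨hab1, h1, h2, h3, h4, hcd1, hFcr⟩]
        linarith [ht2nn]
      · have hbad : Bad g (a, b, c, d) := by
          refine ⟨hab, hac, had, hbc, hbd, hcd, hcr, hab1, hcd1, ?_⟩
          dsimp only
          tauto
        rw [if_pos hbad]
        have h1 : w a.1 b.1 * w c.1 d.1 ≤ 1 :=
          mul_le_one₀ (hw _ _).2 (hw _ _).1 (hw _ _).2
        linarith [htFnn a.1 b.1 c.1 d.1]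
    -- sums
    have hsumle : (∑ a : Fin K × Fin m, ∑ b : Fin K × Fin m, ∑ c : Fin K × Fin m,
          ∑ d : Fin K × Fin m, if a ≠ b ∧ a ≠ c ∧ a ≠ d ∧ b ≠ c ∧ b ≠ d ∧ c ≠ d ∧
            SegCross (g a) (g b) (g c) (g d) then w a.1 b.1 * w c.1 d.1 else 0)
        ≤ (∑ a : Fin K × Fin m, ∑ b : Fin K × Fin m, ∑ c : Fin K × Fin m,
            ∑ d : Fin K × Fin m,
            if a.1 ≠ b.1 ∧ a.1 ≠ c.1 ∧ a.1 ≠ d.1 ∧ b.1 ≠ c.1 ∧ b.1 ≠ d.1 ∧ c.1 ≠ d.1 ∧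
              SegCross (F a.1) (F b.1) (F c.1) (F d.1) then w a.1 b.1 * w c.1 d.1 else 0)
          + (∑ a : Fin K × Fin m, ∑ b : Fin K × Fin m, ∑ c : Fin K × Fin m,
            ∑ d : Fin K × Fin m, if Bad g (a, b, c, d) then (1 : ℝ) else 0) := by
      rw [← Finset.sum_add_distrib]
      refine Finset.sum_le_sum fun a _ => ?_
      rw [← Finset.sum_add_distrib]
      refine Finset.sum_le_sum fun b _ => ?_
      rw [← Finset.sum_add_distrib]
      refine Finset.sum_le_sum fun c _ => ?_
      rw [← Finset.sum_add_distrib]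
      refine Finset.sum_le_sum fun d _ => ?_
      exact hpoint a b c d
    have hSF : (∑ a : Fin K × Fin m, ∑ b : Fin K × Fin m, ∑ c : Fin K × Fin m,
          ∑ d : Fin K × Fin m,
          if a.1 ≠ b.1 ∧ a.1 ≠ c.1 ∧ a.1 ≠ d.1 ∧ b.1 ≠ c.1 ∧ b.1 ≠ d.1 ∧ c.1 ≠ d.1 ∧
            SegCross (F a.1) (F b.1) (F c.1) (F d.1) then w a.1 b.1 * w c.1 d.1 else 0)
        = (m : ℝ) ^ 4 * (∑ i : Fin K, ∑ j : Fin K, ∑ k : Fin K, ∑ l : Fin K,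
          if i ≠ j ∧ i ≠ k ∧ i ≠ l ∧ j ≠ k ∧ j ≠ l ∧ k ≠ l ∧
            SegCross (F i) (F j) (F k) (F l) then w i j * w k l else 0) := by
      simp_rw [Fintype.sum_prod_type]
      simp only [Finset.sum_const, Finset.card_univ, Fintype.card_fin, nsmul_eq_mul]
      simp_rw [← Finset.mul_sum]
      ring
    have hcard : (∑ a : Fin K × Fin m, ∑ b : Fin K × Fin m, ∑ c : Fin K × Fin m,
          ∑ d : Fin K × Fin m, if Bad g (a, b, c, d) then (1 : ℝ) else 0)
        = (((Finset.univ : Finset ((Fin K × Fin m) × (Fin K × Fin m) × (Fin K × Fin m) ×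
            (Fin K × Fin m))).filter (Bad g)).card : ℝ) := by
      rw [← Finset.sum_boole, sum_quad (fun t => if Bad g t then (1 : ℝ) else 0)]
    have hBle : (((Finset.univ : Finset ((Fin K × Fin m) × (Fin K × Fin m) × (Fin K × Fin m) ×
          (Fin K × Fin m))).filter (Bad g)).card : ℝ)
        ≤ 8 * ((K * Nat.choose m 2 * Nat.choose (K * m) 2 : ℕ) : ℝ) := by
      have := bad_card K m g hggp
      exact_mod_cast this
    have hgoalg : crossCount (fun u v : Fin K × Fin m => w u.1 v.1) g
        = (∑ a : Fin K × Fin m, ∑ b : Fin K × Fin m, ∑ c : Fin K × Fin m,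
          ∑ d : Fin K × Fin m, if a ≠ b ∧ a ≠ c ∧ a ≠ d ∧ b ≠ c ∧ b ≠ d ∧ c ≠ d ∧
            SegCross (g a) (g b) (g c) (g d) then w a.1 b.1 * w c.1 d.1 else 0) / 8 := by
      unfold crossCount
      congr 1
      refine Finset.sum_congr rfl fun a _ => ?_
      refine Finset.sum_congr rfl fun b _ => ?_
      refine Finset.sum_congr rfl fun c _ => ?_
      refine Finset.sum_congr rfl fun d _ => ?_
      exact ite_irrel _ _ _ _ _
    have hgoalF : crossCount w F
        = (∑ i : Fin K, ∑ j : Fin K, ∑ k : Fin K, ∑ l : Fin K,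
          if i ≠ j ∧ i ≠ k ∧ i ≠ l ∧ j ≠ k ∧ j ≠ l ∧ k ≠ l ∧
            SegCross (F i) (F j) (F k) (F l) then w i j * w k l else 0) / 8 := by
      unfold crossCount
      congr 1
      refine Finset.sum_congr rfl fun a _ => ?_
      refine Finset.sum_congr rfl fun b _ => ?_
      refine Finset.sum_congr rfl fun c _ => ?_
      refine Finset.sum_congr rfl fun d _ => ?_
      exact ite_irrel _ _ _ _ _
    rw [← hopt, hgoalg, hgoalF]
    rw [hSF, hcard] at hsumle
    linarith [hsumle, hBle]
  · -- numeric bound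
    have h2 : K * Nat.choose m 2 * Nat.choose (K * m) 2 ≤ K ^ 3 * m ^ 4 := by
      calc K * Nat.choose m 2 * Nat.choose (K * m) 2
          ≤ K * m ^ 2 * (K * m) ^ 2 :=
            Nat.mul_le_mul (Nat.mul_le_mul_left K (choose_two_le_sq m))
              (choose_two_le_sq (K * m))
        _ = K ^ 3 * m ^ 4 := by ring
    calc ((K * Nat.choose m 2 * Nat.choose (K * m) 2 : ℕ) : ℝ)
        ≤ ((K ^ 3 * m ^ 4 : ℕ) : ℝ) := by exact_mod_cast h2
      _ = (K : ℝ) ^ 3 * (m : ℝ) ^ 4 := by push_cast; ring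
end
end

section
/- Let G be an edge-weighted graph on K vertices and G[m] its m-fold blow-up. For any straight-line drawing of G[m], averaging over the m^K drawings of G obtained by selecting one point from each blow-up class shows cr̄(G[m]) ≥ m^4 · cr̄(G). -/
open Finset
open scoped Classical BigOperators

noncomputable section

-- AUX

lemma exists_genpos (V : Type*) [Fintype V] :
    ∃ f : V → ℝ × ℝ, Function.Injective f ∧ GenPos f := by
  classical
  set e : V → ℝ := fun v => ((Fintype.equivFin V v : ℕ) : ℝ) with he
  have hei : Function.Injective e := by
    intro a b h
    exact (Fintype.equivFin V).injective (Fin.ext (Nat.cast_injective h))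
  refine ⟨fun v => (e v, e v ^ 2), ?_, ?_⟩
  · intro a b h
    exact hei (congrArg Prod.fst h)
  · intro a b c hab hac hbc
    have h1 : e a ≠ e b := fun h => hab (hei h)
    have h2 : e a ≠ e c := fun h => hac (hei h)
    have h3 : e b ≠ e c := fun h => hbc (hei h)
    have : orient (e a, e a ^ 2) (e b, e b ^ 2) (e c, e c ^ 2)
        = (e b - e a) * ((e c - e a) * (e c - e b)) := by
      simp only [orient]
      ring
    rw [this]
    exact mul_ne_zero (sub_ne_zero.mpr h1.symm)
      (mul_ne_zero (sub_ne_zero.mpr h2.symm) (sub_ne_zero.mpr h3.symm))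

lemma crossCount_nonneg' {V : Type*} [Fintype V] (w : V → V → ℝ)
    (hw : ∀ i j, 0 ≤ w i j) (f : V → ℝ × ℝ) : 0 ≤ crossCount w f := by
  unfold crossCount
  apply div_nonneg _ (by norm_num)
  refine Finset.sum_nonneg fun a _ => Finset.sum_nonneg fun b _ =>
    Finset.sum_nonneg fun c _ => Finset.sum_nonneg fun d _ => ?_
  split
  · exact mul_nonneg (hw _ _) (hw _ _)
  · exact le_rfl

lemma wrcr_le' {V : Type*} [Fintype V] (w : V → V → ℝ) (hw : ∀ i j, 0 ≤ w i j)
    (f : V → ℝ × ℝ) (hfi : Function.Injective f) (hfg : GenPos f) :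
    wrcr V w ≤ crossCount w f := by
  refine csInf_le ⟨0, ?_⟩ ⟨f, hfi, hfg, rfl⟩
  rintro x ⟨g, _, _, rfl⟩
  exact crossCount_nonneg' w hw g

def Tind (K m : ℕ) (w : Fin K → Fin K → ℝ) (f : Fin K × Fin m → ℝ × ℝ)
    (s : Fin K → Fin m) (i j k l : Fin K) : ℝ :=
  if i ≠ j ∧ i ≠ k ∧ i ≠ l ∧ j ≠ k ∧ j ≠ l ∧ k ≠ l ∧
      SegCross (f (i, s i)) (f (j, s j)) (f (k, s k)) (f (l, s l))
    then w i j * w k l else 0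

def Qind (K m : ℕ) (w : Fin K → Fin K → ℝ) (f : Fin K × Fin m → ℝ × ℝ)
    (a b c d : Fin K × Fin m) : ℝ :=
  if a ≠ b ∧ a ≠ c ∧ a ≠ d ∧ b ≠ c ∧ b ≠ d ∧ c ≠ d ∧
      SegCross (f a) (f b) (f c) (f d)
    then w a.1 b.1 * w c.1 d.1 else 0

lemma crossCount_sel (K m : ℕ) (w : Fin K → Fin K → ℝ) (f : Fin K × Fin m → ℝ × ℝ)
    (s : Fin K → Fin m) :
    crossCount w (fun i => f (i, s i)) = (∑ i, ∑ j, ∑ k, ∑ l, Tind K m w f s i j k l) / 8 := by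
  unfold crossCount Tind
  refine congrArg (· / 8) ?_
  refine Finset.sum_congr rfl fun a _ => Finset.sum_congr rfl fun b _ =>
    Finset.sum_congr rfl fun c _ => Finset.sum_congr rfl fun d _ => ?_
  congr

lemma crossCount_blow (K m : ℕ) (w : Fin K → Fin K → ℝ) (f : Fin K × Fin m → ℝ × ℝ) :
    crossCount (fun u v : Fin K × Fin m => w u.1 v.1) f
      = (∑ a, ∑ b, ∑ c, ∑ d, Qind K m w f a b c d) / 8 := by
  unfold crossCount Qind
  refine congrArg (· / 8) ?_
  refine Finset.sum_congr rfl fun a _ => Finset.sum_congr rfl fun b _ =>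
    Finset.sum_congr rfl fun c _ => Finset.sum_congr rfl fun d _ => ?_
  congr

lemma upd4_eval {α β : Type*} [DecidableEq α] (s : α → β) {i j k l : α}
    (hij : i ≠ j) (hik : i ≠ k) (hil : i ≠ l) (hjk : j ≠ k) (hjl : j ≠ l) (hkl : k ≠ l)
    (p q r t : β) :
    (Function.update (Function.update (Function.update (Function.update s i p) j q) k r) l t) i = p ∧
    (Function.update (Function.update (Function.update (Function.update s i p) j q) k r) l t) j = q ∧
    (Function.update (Function.update (Function.update (Function.update s i p) j q) k r) l t) k = r ∧
    (Function.update (Function.update (Function.update (Function.update s i p) j q) k r) l t) l = t := by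
  refine ⟨?_, ?_, ?_, ?_⟩ <;>
    simp [Function.update_apply, hij, hik, hil, hjk, hjl, hkl]

lemma upd4_other {α β : Type*} [DecidableEq α] (s : α → β) {i j k l x : α}
    (h1 : x ≠ i) (h2 : x ≠ j) (h3 : x ≠ k) (h4 : x ≠ l) (p q r t : β) :
    (Function.update (Function.update (Function.update (Function.update s i p) j q) k r) l t) x = s x := by
  simp [Function.update_apply, h1, h2, h3, h4]

def theta (K m : ℕ) :
    ((Fin m × Fin m × Fin m × Fin m) × (Fin K → Fin m) × (Fin K × Fin K × Fin K × Fin K)) →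
      ((Fin K → Fin m) × ((Fin K × Fin m) × (Fin K × Fin m) × (Fin K × Fin m) × (Fin K × Fin m))) :=
  fun ω =>
    (Function.update (Function.update (Function.update
        (Function.update ω.2.1 ω.2.2.1 ω.1.1) ω.2.2.2.1 ω.1.2.1) ω.2.2.2.2.1 ω.1.2.2.1)
        ω.2.2.2.2.2 ω.1.2.2.2,
     ((ω.2.2.1, ω.2.1 ω.2.2.1), (ω.2.2.2.1, ω.2.1 ω.2.2.2.1),
      (ω.2.2.2.2.1, ω.2.1 ω.2.2.2.2.1), (ω.2.2.2.2.2, ω.2.1 ω.2.2.2.2.2)))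

set_option maxHeartbeats 1000000 in
lemma key_ineq (K m : ℕ) (w : Fin K → Fin K → ℝ) (f : Fin K × Fin m → ℝ × ℝ)
    (hw0 : ∀ i j, 0 ≤ w i j) :
    (m : ℝ) ^ 4 * ∑ s : Fin K → Fin m, ∑ i, ∑ j, ∑ k, ∑ l, Tind K m w f s i j k l
      ≤ (m : ℝ) ^ K * ∑ a, ∑ b, ∑ c, ∑ d, Qind K m w f a b c d := by
  classical
  have e1 : ∑ ω : (Fin m × Fin m × Fin m × Fin m) × (Fin K → Fin m) × (Fin K × Fin K × Fin K × Fin K),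
        Tind K m w f ω.2.1 ω.2.2.1 ω.2.2.2.1 ω.2.2.2.2.1 ω.2.2.2.2.2
      = (m : ℝ) ^ 4 * ∑ s : Fin K → Fin m, ∑ i, ∑ j, ∑ k, ∑ l, Tind K m w f s i j k l := by
    simp only [Fintype.sum_prod_type]
    simp only [Finset.sum_const, Finset.card_univ, Fintype.card_fin, nsmul_eq_mul]
    push_cast
    ring
  have e2 : ∑ ω : (Fin K → Fin m) × ((Fin K × Fin m) × (Fin K × Fin m) × (Fin K × Fin m) × (Fin K × Fin m)),
        Qind K m w f ω.2.1 ω.2.2.1 ω.2.2.2.1 ω.2.2.2.2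
      = (m : ℝ) ^ K * ∑ a, ∑ b, ∑ c, ∑ d, Qind K m w f a b c d := by
    simp only [Fintype.sum_prod_type]
    simp only [Finset.sum_const, Finset.card_univ, Fintype.card_fun, Fintype.card_fin, nsmul_eq_mul]
    push_cast
    ring
  rw [← e1, ← e2]
  have hQ0 : ∀ y : (Fin K → Fin m) × ((Fin K × Fin m) × (Fin K × Fin m) × (Fin K × Fin m) × (Fin K × Fin m)),
      0 ≤ Qind K m w f y.2.1 y.2.2.1 y.2.2.2.1 y.2.2.2.2 := by
    intro y
    unfold Qind
    split
    · exact mul_nonneg (hw0 _ _) (hw0 _ _)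
    · exact le_rfl
  set S1 : Finset ((Fin m × Fin m × Fin m × Fin m) × (Fin K → Fin m) × (Fin K × Fin K × Fin K × Fin K)) :=
    Finset.univ.filter
      (fun ω => Tind K m w f ω.2.1 ω.2.2.1 ω.2.2.2.1 ω.2.2.2.2.1 ω.2.2.2.2.2 ≠ 0) with hS1
  have hcond : ∀ ω ∈ S1,
      ω.2.2.1 ≠ ω.2.2.2.1 ∧ ω.2.2.1 ≠ ω.2.2.2.2.1 ∧ ω.2.2.1 ≠ ω.2.2.2.2.2 ∧
      ω.2.2.2.1 ≠ ω.2.2.2.2.1 ∧ ω.2.2.2.1 ≠ ω.2.2.2.2.2 ∧ ω.2.2.2.2.1 ≠ ω.2.2.2.2.2 ∧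
      SegCross (f (ω.2.2.1, ω.2.1 ω.2.2.1)) (f (ω.2.2.2.1, ω.2.1 ω.2.2.2.1))
        (f (ω.2.2.2.2.1, ω.2.1 ω.2.2.2.2.1)) (f (ω.2.2.2.2.2, ω.2.1 ω.2.2.2.2.2)) := by
    intro ω hω
    have hne := (Finset.mem_filter.mp hω).2
    by_contra hc
    exact hne (if_neg hc)
  have hTG : ∀ ω ∈ S1,
      Tind K m w f ω.2.1 ω.2.2.1 ω.2.2.2.1 ω.2.2.2.2.1 ω.2.2.2.2.2
        = Qind K m w f (theta K m ω).2.1 (theta K m ω).2.2.1 (theta K m ω).2.2.2.1 (theta K m ω).2.2.2.2 := by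
    intro ω hω
    obtain ⟨hij, hik, hil, hjk, hjl, hkl, hX⟩ := hcond ω hω
    unfold Tind Qind theta
    rw [if_pos ⟨hij, hik, hil, hjk, hjl, hkl, hX⟩]
    rw [if_pos ⟨fun h => hij (congrArg Prod.fst h), fun h => hik (congrArg Prod.fst h),
      fun h => hil (congrArg Prod.fst h), fun h => hjk (congrArg Prod.fst h),
      fun h => hjl (congrArg Prod.fst h), fun h => hkl (congrArg Prod.fst h), hX⟩]
  have hinj : ∀ ω ∈ S1, ∀ ω' ∈ S1, theta K m ω = theta K m ω' → ω = ω' := by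
    intro ω hω ω' hω' heq
    obtain ⟨hij, hik, hil, hjk, hjl, hkl, -⟩ := hcond ω hω
    obtain ⟨hij', hik', hil', hjk', hjl', hkl', -⟩ := hcond ω' hω'
    obtain ⟨⟨p, q, r, t⟩, s, i, j, k, l⟩ := ω
    obtain ⟨⟨p', q', r', t'⟩, s', i', j', k', l'⟩ := ω'
    simp only [theta, Prod.mk.injEq] at heq
    obtain ⟨hu, ⟨hi, hsi⟩, ⟨hj, hsj⟩, ⟨hk, hsk⟩, ⟨hl, hsl⟩⟩ := heq
    simp only at hij hik hil hjk hjl hkl hij' hik' hil' hjk' hjl' hkl' hsi hsj hsk hsl hu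
    subst hi; subst hj; subst hk; subst hl
    obtain ⟨hu1, hu2, hu3, hu4⟩ := upd4_eval s hij hik hil hjk hjl hkl p q r t
    obtain ⟨hu1', hu2', hu3', hu4'⟩ := upd4_eval s' hij' hik' hil' hjk' hjl' hkl' p' q' r' t'
    have hp : p = p' := by rw [← hu1, ← hu1', hu]
    have hq : q = q' := by rw [← hu2, ← hu2', hu]
    have hr : r = r' := by rw [← hu3, ← hu3', hu]
    have ht : t = t' := by rw [← hu4, ← hu4', hu]
    have hs : s = s' := by
      funext x
      by_cases h1 : x = i
      · rw [h1, hsi]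
      by_cases h2 : x = j
      · rw [h2, hsj]
      by_cases h3 : x = k
      · rw [h3, hsk]
      by_cases h4 : x = l
      · rw [h4, hsl]
      rw [← upd4_other s h1 h2 h3 h4 p q r t, ← upd4_other s' h1 h2 h3 h4 p' q' r' t', hu]
    subst hp; subst hq; subst hr; subst ht; subst hs
    rfl
  calc ∑ ω : (Fin m × Fin m × Fin m × Fin m) × (Fin K → Fin m) × (Fin K × Fin K × Fin K × Fin K),
        Tind K m w f ω.2.1 ω.2.2.1 ω.2.2.2.1 ω.2.2.2.2.1 ω.2.2.2.2.2
      = ∑ ω ∈ S1, Tind K m w f ω.2.1 ω.2.2.1 ω.2.2.2.1 ω.2.2.2.2.1 ω.2.2.2.2.2 := by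
        rw [hS1, Finset.sum_filter_ne_zero]
    _ = ∑ ω ∈ S1, Qind K m w f (theta K m ω).2.1 (theta K m ω).2.2.1 (theta K m ω).2.2.2.1 (theta K m ω).2.2.2.2 :=
        Finset.sum_congr rfl hTG
    _ = ∑ y ∈ S1.image (theta K m), Qind K m w f y.2.1 y.2.2.1 y.2.2.2.1 y.2.2.2.2 :=
        (Finset.sum_image (f := fun y => Qind K m w f y.2.1 y.2.2.1 y.2.2.2.1 y.2.2.2.2) hinj).symm
    _ ≤ ∑ y : (Fin K → Fin m) × ((Fin K × Fin m) × (Fin K × Fin m) × (Fin K × Fin m) × (Fin K × Fin m)),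
          Qind K m w f y.2.1 y.2.2.1 y.2.2.2.1 y.2.2.2.2 :=
        Finset.sum_le_sum_of_subset_of_nonneg (Finset.subset_univ _) (fun y _ _ => hQ0 y)


/-- Averaging over selections of one vertex per blow-up class gives
`cr̄(G[m]) ≥ m^4 cr̄(G)`. -/
theorem stmt_10 (K m : ℕ) (w : Fin K → Fin K → ℝ)
    (hsymm : ∀ i j, w i j = w j i) (hdiag : ∀ i, w i i = 0)
    (hw : ∀ i j, 0 ≤ w i j ∧ w i j ≤ 1) :
    (m : ℝ) ^ 4 * wrcr (Fin K) w ≤ wrcr (Fin K × Fin m) (fun u v => w u.1 v.1) := by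
  classical
  have hw0 : ∀ i j, 0 ≤ w i j := fun i j => (hw i j).1
  obtain ⟨f0, hf0i, hf0g⟩ := exists_genpos (Fin K × Fin m)
  refine le_csInf ⟨_, f0, hf0i, hf0g, rfl⟩ ?_
  rintro x ⟨f, hfi, hfg, rfl⟩
  rcases Nat.eq_zero_or_pos m with hm | hm
  · subst hm
    simpa using crossCount_nonneg' _ (fun u v : Fin K × Fin 0 => hw0 u.1 v.1) f
  have h1 : ∀ s : Fin K → Fin m, wrcr (Fin K) w ≤ crossCount w (fun i => f (i, s i)) := by
    intro s
    refine wrcr_le' w hw0 _ (fun a b h => congrArg Prod.fst (hfi h)) ?_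
    intro a b c hab hac hbc
    exact hfg (a, s a) (b, s b) (c, s c) (fun h => hab (congrArg Prod.fst h))
      (fun h => hac (congrArg Prod.fst h)) (fun h => hbc (congrArg Prod.fst h))
  have hKpos : (0 : ℝ) < (m : ℝ) ^ K := pow_pos (by exact_mod_cast hm) K
  have key := key_ineq K m w f hw0
  have hsum : ∑ s : Fin K → Fin m, crossCount w (fun i => f (i, s i))
      = (∑ s : Fin K → Fin m, ∑ i, ∑ j, ∑ k, ∑ l, Tind K m w f s i j k l) / 8 := by
    rw [Finset.sum_div]
    exact Finset.sum_congr rfl fun s _ => crossCount_sel K m w f s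
  have h2 : (m : ℝ) ^ K * wrcr (Fin K) w
      ≤ ∑ s : Fin K → Fin m, crossCount w (fun i => f (i, s i)) := by
    calc (m : ℝ) ^ K * wrcr (Fin K) w
        = ∑ _s : Fin K → Fin m, wrcr (Fin K) w := by
          rw [Finset.sum_const, Finset.card_univ, Fintype.card_fun, Fintype.card_fin,
            Fintype.card_fin, nsmul_eq_mul]
          push_cast
          ring
      _ ≤ _ := Finset.sum_le_sum fun s _ => h1 s
  have h3 : (m : ℝ) ^ K * ((m : ℝ) ^ 4 * wrcr (Fin K) w)
      ≤ (m : ℝ) ^ K * crossCount (fun u v : Fin K × Fin m => w u.1 v.1) f := by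
    have h4 : (m : ℝ) ^ 4 * ((m : ℝ) ^ K * wrcr (Fin K) w)
        ≤ (m : ℝ) ^ 4 * ∑ s : Fin K → Fin m, crossCount w (fun i => f (i, s i)) :=
      mul_le_mul_of_nonneg_left h2 (by positivity)
    rw [hsum] at h4
    rw [crossCount_blow K m w f]
    calc (m : ℝ) ^ K * ((m : ℝ) ^ 4 * wrcr (Fin K) w)
        = (m : ℝ) ^ 4 * ((m : ℝ) ^ K * wrcr (Fin K) w) := by ring
      _ ≤ (m : ℝ) ^ 4 * ((∑ s : Fin K → Fin m, ∑ i, ∑ j, ∑ k, ∑ l, Tind K m w f s i j k l) / 8) := h4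
      _ ≤ (m : ℝ) ^ K * ((∑ a, ∑ b, ∑ c, ∑ d, Qind K m w f a b c d) / 8) := by
          rw [← mul_div_assoc, ← mul_div_assoc]
          exact div_le_div_of_nonneg_right key (by norm_num)
  exact le_of_mul_le_mul_left h3 hKpos
end
end

section
/- Fix 0 < p < 1 and let (G_n) be quasi-random with density p. Then cr̄(G_n) ≤ p^2 · cr̄(K_n) + o(n^4). -/
open Finset
open scoped Classical BigOperators

noncomputable section

def dist4 {n : ℕ} (a b c d : Fin n) : Prop :=
  a ≠ b ∧ a ≠ c ∧ a ≠ d ∧ b ≠ c ∧ b ≠ d ∧ c ≠ d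

lemma exists_perm_four {n : ℕ} {a b c d x y z t : Fin n}
    (h1 : dist4 a b c d) (h2 : dist4 x y z t) :
    ∃ σ : Equiv.Perm (Fin n), σ a = x ∧ σ b = y ∧ σ c = z ∧ σ d = t := by
  obtain ⟨hab, hac, had, hbc, hbd, hcd⟩ := h1
  obtain ⟨hxy, hxz, hxt, hyz, hyt, hzt⟩ := h2
  set σ1 : Equiv.Perm (Fin n) := Equiv.swap a x with hσ1
  have s1a : σ1 a = x := Equiv.swap_apply_left a x
  set σ2 : Equiv.Perm (Fin n) := σ1.trans (Equiv.swap (σ1 b) y) with hσ2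
  have s2a : σ2 a = x := by
    have h1' : x ≠ σ1 b := fun h => hab (σ1.injective (by rw [s1a, h]))
    simp only [hσ2, Equiv.trans_apply, s1a]
    exact Equiv.swap_apply_of_ne_of_ne h1' hxy
  have s2b : σ2 b = y := by simp [hσ2, Equiv.trans_apply]
  set σ3 : Equiv.Perm (Fin n) := σ2.trans (Equiv.swap (σ2 c) z) with hσ3
  have hc2 : σ2 c ≠ x := fun h => hac (σ2.injective (by rw [s2a, h]))
  have hc2' : σ2 c ≠ y := fun h => hbc (σ2.injective (by rw [s2b, h]))
  have s3a : σ3 a = x := by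
    simp only [hσ3, Equiv.trans_apply, s2a]
    exact Equiv.swap_apply_of_ne_of_ne (Ne.symm hc2) hxz
  have s3b : σ3 b = y := by
    simp only [hσ3, Equiv.trans_apply, s2b]
    exact Equiv.swap_apply_of_ne_of_ne (Ne.symm hc2') hyz
  have s3c : σ3 c = z := by simp [hσ3, Equiv.trans_apply]
  set σ4 : Equiv.Perm (Fin n) := σ3.trans (Equiv.swap (σ3 d) t) with hσ4
  have hd3 : σ3 d ≠ x := fun h => had (σ3.injective (by rw [s3a, h]))
  have hd3' : σ3 d ≠ y := fun h => hbd (σ3.injective (by rw [s3b, h]))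
  have hd3'' : σ3 d ≠ z := fun h => hcd (σ3.injective (by rw [s3c, h]))
  refine ⟨σ4, ?_, ?_, ?_, ?_⟩
  · simp only [hσ4, Equiv.trans_apply, s3a]
    exact Equiv.swap_apply_of_ne_of_ne (Ne.symm hd3) hxt
  · simp only [hσ4, Equiv.trans_apply, s3b]
    exact Equiv.swap_apply_of_ne_of_ne (Ne.symm hd3') hyt
  · simp only [hσ4, Equiv.trans_apply, s3c]
    exact Equiv.swap_apply_of_ne_of_ne (Ne.symm hd3'') hzt
  · simp [hσ4, Equiv.trans_apply]

lemma sum_perm_congr {n : ℕ} (F : Fin n → Fin n → Fin n → Fin n → ℝ)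
    {a b c d x y z t : Fin n} (h1 : dist4 a b c d) (h2 : dist4 x y z t) :
    ∑ π : Equiv.Perm (Fin n), F (π a) (π b) (π c) (π d)
      = ∑ π : Equiv.Perm (Fin n), F (π x) (π y) (π z) (π t) := by
  obtain ⟨σ, hx, hy, hz, ht⟩ := exists_perm_four h2 h1
  have := Equiv.sum_comp (Equiv.mulRight σ)
    (fun π : Equiv.Perm (Fin n) => F (π x) (π y) (π z) (π t))
  simp only [Equiv.coe_mulRight, Equiv.Perm.mul_apply, hx, hy, hz, ht] at this
  exact this
section AuxB
open Finset
variable {n : ℕ}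

lemma exists_good (n : ℕ) : ∃ f : Fin n → ℝ × ℝ, Function.Injective f ∧ GenPos f := by
  refine ⟨fun i => (((i : ℕ) : ℝ) + 1, (((i : ℕ) : ℝ) + 1) ^ 3), ?_, ?_⟩
  · intro i j h
    have h1 : ((i : ℕ) : ℝ) + 1 = ((j : ℕ) : ℝ) + 1 := congrArg Prod.fst h
    have h2 : ((i : ℕ) : ℝ) = ((j : ℕ) : ℝ) := by linarith
    exact Fin.ext (by exact_mod_cast h2)
  · intro a b c hab hac hbc
    set x : ℝ := ((a : ℕ) : ℝ) + 1 with hx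
    set y : ℝ := ((b : ℕ) : ℝ) + 1 with hy
    set z : ℝ := ((c : ℕ) : ℝ) + 1 with hz
    have hxy : x ≠ y := by
      intro h
      have h2 : ((a : ℕ) : ℝ) = ((b : ℕ) : ℝ) := by rw [hx, hy] at h; linarith
      exact hab (Fin.ext (by exact_mod_cast h2))
    have hxz : x ≠ z := by
      intro h
      have h2 : ((a : ℕ) : ℝ) = ((c : ℕ) : ℝ) := by rw [hx, hz] at h; linarith
      exact hac (Fin.ext (by exact_mod_cast h2))
    have hyz : y ≠ z := by
      intro h
      have h2 : ((b : ℕ) : ℝ) = ((c : ℕ) : ℝ) := by rw [hy, hz] at h; linarith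
      exact hbc (Fin.ext (by exact_mod_cast h2))
    have hpos : 0 < x + y + z := by
      have ha' : (0:ℝ) ≤ ((a : ℕ) : ℝ) := Nat.cast_nonneg _
      have hb' : (0:ℝ) ≤ ((b : ℕ) : ℝ) := Nat.cast_nonneg _
      have hc' : (0:ℝ) ≤ ((c : ℕ) : ℝ) := Nat.cast_nonneg _
      rw [hx, hy, hz]; linarith
    have key : orient (x, x ^ 3) (y, y ^ 3) (z, z ^ 3)
        = (y - x) * (z - x) * (z - y) * (x + y + z) := by
      simp only [orient]; ring
    show orient (x, x ^ 3) (y, y ^ 3) (z, z ^ 3) ≠ 0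
    rw [key]
    exact mul_ne_zero (mul_ne_zero (mul_ne_zero
      (sub_ne_zero_of_ne hxy.symm) (sub_ne_zero_of_ne hxz.symm))
      (sub_ne_zero_of_ne hyz.symm)) (ne_of_gt hpos)

lemma crossCount_nonneg (w : Fin n → Fin n → ℝ) (hw : ∀ a b, 0 ≤ w a b)
    (f : Fin n → ℝ × ℝ) : 0 ≤ crossCount w f := by
  unfold crossCount
  apply div_nonneg _ (by norm_num)
  refine Finset.sum_nonneg fun a _ => Finset.sum_nonneg fun b _ =>
    Finset.sum_nonneg fun c _ => Finset.sum_nonneg fun d _ => ?_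
  split
  · exact mul_nonneg (hw _ _) (hw _ _)
  · exact le_refl _

lemma crossCount_le (w : Fin n → Fin n → ℝ) (hw : ∀ a b, w a b ≤ 1)
    (hw0 : ∀ a b, 0 ≤ w a b) (f : Fin n → ℝ × ℝ) :
    crossCount w f ≤ (n : ℝ) ^ 4 := by
  unfold crossCount
  rw [div_le_iff₀ (by norm_num : (0:ℝ) < 8)]
  refine le_trans (b := ∑ _a : Fin n, ∑ _b : Fin n, ∑ _c : Fin n, ∑ _d : Fin n, (1:ℝ))
    (Finset.sum_le_sum fun a _ => Finset.sum_le_sum fun b _ =>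
      Finset.sum_le_sum fun c _ => Finset.sum_le_sum fun d _ => ?_) ?_
  · split
    · exact mul_le_one₀ (hw _ _) (hw0 _ _) (hw _ _)
    · norm_num
  · have h2 : (∑ _a : Fin n, ∑ _b : Fin n, ∑ _c : Fin n, ∑ _d : Fin n, (1:ℝ)) = (n:ℝ)^4 := by
      simp [Finset.sum_const, Finset.card_univ]; ring
    rw [h2]
    nlinarith [sq_nonneg ((n:ℝ)^2), pow_nonneg (Nat.cast_nonneg n : (0:ℝ) ≤ n) 4]

end AuxB
section AuxC
open Finset
variable {n : ℕ}

def Dsum (n : ℕ) (w : Fin n → Fin n → ℝ) : ℝ :=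
  ∑ a, ∑ b, ∑ c, ∑ d, if dist4 a b c d then w a b * w c d else 0

def Nval (n : ℕ) : ℝ :=
  ∑ a : Fin n, ∑ b, ∑ c, ∑ d, if dist4 a b c d then (1:ℝ) else 0

lemma flat4 (F : Fin n → Fin n → Fin n → Fin n → ℝ) :
    (∑ a, ∑ b, ∑ c, ∑ d, F a b c d)
      = ∑ q : Fin n × Fin n × Fin n × Fin n, F q.1 q.2.1 q.2.2.1 q.2.2.2 := by
  simp [Fintype.sum_prod_type]

lemma adjW_top {a b : Fin n} (h : a ≠ b) :
    adjW (⊤ : SimpleGraph (Fin n)) a b = 1 := by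
  simp [adjW, h]

lemma key (hn : 4 ≤ n) (w : Fin n → Fin n → ℝ) (hw : ∀ a b, 0 ≤ w a b)
    (f : Fin n → ℝ × ℝ) (hf : Function.Injective f) (hg : GenPos f) :
    ∃ f' : Fin n → ℝ × ℝ, Function.Injective f' ∧ GenPos f' ∧
      Nval n * (8 * crossCount w f')
        ≤ Dsum n w * (8 * crossCount (adjW (⊤ : SimpleGraph (Fin n))) f) := by
  classical
  set χ : Fin n → Fin n → Fin n → Fin n → Prop := fun x y z t =>
    x ≠ y ∧ x ≠ z ∧ x ≠ t ∧ y ≠ z ∧ y ≠ t ∧ z ≠ t ∧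
      SegCross (f x) (f y) (f z) (f t) with hχ
  set I : Fin n → Fin n → Fin n → Fin n → ℝ := fun x y z t =>
    if χ x y z t then 1 else 0 with hI
  have hIa : ∀ x y z t, I x y z t = if χ x y z t then 1 else 0 := fun _ _ _ _ => rfl
  set T : ℝ := ∑ a, ∑ b, ∑ c, ∑ d, I a b c d with hT
  set C : Equiv.Perm (Fin n) → ℝ := fun π =>
    ∑ a, ∑ b, ∑ c, ∑ d, if χ (π a) (π b) (π c) (π d) then w a b * w c d else 0 with hC
  have h8 : ∀ x : ℝ, 8 * (x / 8) = x := fun x => by ring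
  -- χ of images implies dist4 of the originals
  have χdist : ∀ (π : Equiv.Perm (Fin n)) a b c d,
      χ (π a) (π b) (π c) (π d) → dist4 a b c d := by
    intro π a b c d h
    exact ⟨fun e => h.1 (congrArg π e), fun e => h.2.1 (congrArg π e),
      fun e => h.2.2.1 (congrArg π e), fun e => h.2.2.2.1 (congrArg π e),
      fun e => h.2.2.2.2.1 (congrArg π e), fun e => h.2.2.2.2.2.1 (congrArg π e)⟩
  -- canonical distinct quadruple
  have h0 : (0:ℕ) < n := by omega
  have h1 : (1:ℕ) < n := by omega
  have h2 : (2:ℕ) < n := by omega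
  have h3 : (3:ℕ) < n := by omega
  set e0 : Fin n := ⟨0, h0⟩
  set e1 : Fin n := ⟨1, h1⟩
  set e2 : Fin n := ⟨2, h2⟩
  set e3 : Fin n := ⟨3, h3⟩
  have he : dist4 e0 e1 e2 e3 := by
    refine ⟨?_, ?_, ?_, ?_, ?_, ?_⟩ <;> simp [e0, e1, e2, e3, Fin.ext_iff]
  set α : ℝ := ∑ π : Equiv.Perm (Fin n), I (π e0) (π e1) (π e2) (π e3) with hα'
  have hα : ∀ a b c d : Fin n, dist4 a b c d →
      (∑ π : Equiv.Perm (Fin n), I (π a) (π b) (π c) (π d)) = α :=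
    fun a b c d h => sum_perm_congr I h he
  have hzero : ∀ (a b c d : Fin n), ¬ dist4 a b c d →
      ∀ π : Equiv.Perm (Fin n), I (π a) (π b) (π c) (π d) = 0 := by
    intro a b c d hnd π
    rw [hIa]
    exact if_neg (fun h => hnd (χdist π a b c d h))
  -- 8 * crossCount w (f ∘ π) = C π
  have cc_pi : ∀ π : Equiv.Perm (Fin n), 8 * crossCount w (f ∘ π) = C π := by
    intro π
    rw [crossCount, h8, hC]
    refine Finset.sum_congr rfl fun a _ => Finset.sum_congr rfl fun b _ =>
      Finset.sum_congr rfl fun c _ => Finset.sum_congr rfl fun d _ => ?_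
    have hiff : (a ≠ b ∧ a ≠ c ∧ a ≠ d ∧ b ≠ c ∧ b ≠ d ∧ c ≠ d ∧
        SegCross ((f ∘ π) a) ((f ∘ π) b) ((f ∘ π) c) ((f ∘ π) d))
        ↔ χ (π a) (π b) (π c) (π d) := by
      simp only [hχ, Function.comp_apply, ne_eq, EmbeddingLike.apply_eq_iff_eq]
    by_cases h : χ (π a) (π b) (π c) (π d)
    · rw [if_pos (hiff.mpr h), if_pos h]
    · rw [if_neg (fun hh => h (hiff.mp hh)), if_neg h]
  have cc_top : 8 * crossCount (adjW (⊤ : SimpleGraph (Fin n))) f = T := by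
    rw [crossCount, h8, hT]
    refine Finset.sum_congr rfl fun a _ => Finset.sum_congr rfl fun b _ =>
      Finset.sum_congr rfl fun c _ => Finset.sum_congr rfl fun d _ => ?_
    rw [hIa]
    by_cases h : χ a b c d
    · have hraw : a ≠ b ∧ a ≠ c ∧ a ≠ d ∧ b ≠ c ∧ b ≠ d ∧ c ≠ d ∧
          SegCross (f a) (f b) (f c) (f d) := h
      rw [if_pos hraw, if_pos h, adjW_top h.1, adjW_top h.2.2.2.2.2.1, mul_one]
    · have hraw : ¬(a ≠ b ∧ a ≠ c ∧ a ≠ d ∧ b ≠ c ∧ b ≠ d ∧ c ≠ d ∧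
          SegCross (f a) (f b) (f c) (f d)) := fun hh => h hh
      rw [if_neg hraw, if_neg h]
  -- ∑ over permutations of C equals Dsum * α
  have sumC : (∑ π : Equiv.Perm (Fin n), C π) = Dsum n w * α := by
    calc (∑ π : Equiv.Perm (Fin n), C π)
        = ∑ π : Equiv.Perm (Fin n), ∑ q : Fin n × Fin n × Fin n × Fin n,
            (if χ (π q.1) (π q.2.1) (π q.2.2.1) (π q.2.2.2)
              then w q.1 q.2.1 * w q.2.2.1 q.2.2.2 else 0) :=
          Finset.sum_congr rfl fun π _ => flat4 _
      _ = ∑ q : Fin n × Fin n × Fin n × Fin n, ∑ π : Equiv.Perm (Fin n),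
            (if χ (π q.1) (π q.2.1) (π q.2.2.1) (π q.2.2.2)
              then w q.1 q.2.1 * w q.2.2.1 q.2.2.2 else 0) := Finset.sum_comm
      _ = ∑ q : Fin n × Fin n × Fin n × Fin n,
            (w q.1 q.2.1 * w q.2.2.1 q.2.2.2) *
              ∑ π : Equiv.Perm (Fin n), I (π q.1) (π q.2.1) (π q.2.2.1) (π q.2.2.2) := by
          refine Finset.sum_congr rfl fun q _ => ?_
          rw [Finset.mul_sum]
          refine Finset.sum_congr rfl fun π _ => ?_
          rw [hIa]
          by_cases h : χ (π q.1) (π q.2.1) (π q.2.2.1) (π q.2.2.2)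
          · rw [if_pos h, if_pos h, mul_one]
          · rw [if_neg h, if_neg h, mul_zero]
      _ = ∑ q : Fin n × Fin n × Fin n × Fin n,
            (if dist4 q.1 q.2.1 q.2.2.1 q.2.2.2
              then w q.1 q.2.1 * w q.2.2.1 q.2.2.2 else 0) * α := by
          refine Finset.sum_congr rfl fun q _ => ?_
          by_cases h : dist4 q.1 q.2.1 q.2.2.1 q.2.2.2
          · rw [hα _ _ _ _ h, if_pos h]
          · rw [if_neg h, Finset.sum_eq_zero fun π _ => hzero _ _ _ _ h π,
              mul_zero, zero_mul]
      _ = Dsum n w * α := by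
          rw [← Finset.sum_mul, Dsum, flat4]
  -- Nval * α = card * T
  have sumN : Nval n * α = (Fintype.card (Equiv.Perm (Fin n)) : ℝ) * T := by
    calc Nval n * α
        = (∑ q : Fin n × Fin n × Fin n × Fin n,
            (if dist4 q.1 q.2.1 q.2.2.1 q.2.2.2 then (1:ℝ) else 0)) * α := by
          rw [Nval, flat4]
      _ = ∑ q : Fin n × Fin n × Fin n × Fin n,
            ∑ π : Equiv.Perm (Fin n), I (π q.1) (π q.2.1) (π q.2.2.1) (π q.2.2.2) := by
          rw [Finset.sum_mul]
          refine Finset.sum_congr rfl fun q _ => ?_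
          by_cases h : dist4 q.1 q.2.1 q.2.2.1 q.2.2.2
          · rw [if_pos h, one_mul, hα _ _ _ _ h]
          · rw [if_neg h, zero_mul, Finset.sum_eq_zero fun π _ => hzero _ _ _ _ h π]
      _ = ∑ π : Equiv.Perm (Fin n),
            ∑ q : Fin n × Fin n × Fin n × Fin n,
              I (π q.1) (π q.2.1) (π q.2.2.1) (π q.2.2.2) := Finset.sum_comm
      _ = ∑ _π : Equiv.Perm (Fin n), T := by
          refine Finset.sum_congr rfl fun π _ => ?_
          rw [hT, flat4]
          exact Equiv.sum_comp (π.prodCongr (π.prodCongr (π.prodCongr π)))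
            (fun q : Fin n × Fin n × Fin n × Fin n => I q.1 q.2.1 q.2.2.1 q.2.2.2)
      _ = (Fintype.card (Equiv.Perm (Fin n)) : ℝ) * T := by
          rw [Finset.sum_const, Finset.card_univ, nsmul_eq_mul]
  -- minimum is at most average
  have hcardpos : (0:ℝ) < (Fintype.card (Equiv.Perm (Fin n)) : ℝ) := by
    exact_mod_cast Fintype.card_pos
  obtain ⟨π, -, hπ⟩ := Finset.exists_le_of_sum_le (s := Finset.univ)
    (f := C)
    (g := fun _ => (∑ π' : Equiv.Perm (Fin n), C π') /
      (Fintype.card (Equiv.Perm (Fin n)) : ℝ))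
    Finset.univ_nonempty
    (le_of_eq (by rw [Finset.sum_const, Finset.card_univ, nsmul_eq_mul]; field_simp))
  have hN0 : 0 ≤ Nval n := by
    rw [Nval, flat4]
    refine Finset.sum_nonneg fun q _ => ?_
    split
    · norm_num
    · exact le_refl _
  refine ⟨f ∘ π, hf.comp π.injective, ?_, ?_⟩
  · intro a b c hab hac hbc
    simp only [Function.comp_apply]
    exact hg _ _ _ (fun h => hab (π.injective h)) (fun h => hac (π.injective h))
      (fun h => hbc (π.injective h))
  · rw [cc_pi π, cc_top]
    calc Nval n * C π
        ≤ Nval n * ((∑ π' : Equiv.Perm (Fin n), C π') /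
            (Fintype.card (Equiv.Perm (Fin n)) : ℝ)) :=
          mul_le_mul_of_nonneg_left hπ hN0
      _ = (Nval n * α) * Dsum n w / (Fintype.card (Equiv.Perm (Fin n)) : ℝ) := by
          rw [sumC]; ring
      _ = ((Fintype.card (Equiv.Perm (Fin n)) : ℝ) * T) * Dsum n w /
            (Fintype.card (Equiv.Perm (Fin n)) : ℝ) := by rw [sumN]
      _ = Dsum n w * T := by field_simp

end AuxC
section AuxD
open Finset
variable {n : ℕ}

lemma ind_nonneg (P : Prop) [Decidable P] : (0:ℝ) ≤ if P then 1 else 0 := by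
  split <;> norm_num
lemma ind_le_one (P : Prop) [Decidable P] : (if P then (1:ℝ) else 0) ≤ 1 := by
  split <;> norm_num

lemma bad_le (n : ℕ) :
    (∑ a : Fin n, ∑ b : Fin n, ∑ c : Fin n, ∑ d : Fin n,
      if ¬ dist4 a b c d then (1:ℝ) else 0) ≤ 6 * (n:ℝ)^3 := by
  have step : (∑ a : Fin n, ∑ b : Fin n, ∑ c : Fin n, ∑ d : Fin n,
      if ¬ dist4 a b c d then (1:ℝ) else 0)
      ≤ ∑ a : Fin n, ∑ b : Fin n, ∑ c : Fin n, ∑ d : Fin n,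
        ((if a = b then (1:ℝ) else 0) + (if a = c then (1:ℝ) else 0)
          + (if a = d then (1:ℝ) else 0) + (if b = c then (1:ℝ) else 0)
          + (if b = d then (1:ℝ) else 0) + (if c = d then (1:ℝ) else 0)) := by
    refine Finset.sum_le_sum fun a _ => Finset.sum_le_sum fun b _ =>
      Finset.sum_le_sum fun c _ => Finset.sum_le_sum fun d _ => ?_
    have t1 := ind_nonneg (a = b); have t2 := ind_nonneg (a = c)
    have t3 := ind_nonneg (a = d); have t4 := ind_nonneg (b = c)
    have t5 := ind_nonneg (b = d); have t6 := ind_nonneg (c = d)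
    by_cases h : dist4 a b c d
    · rw [if_neg (not_not_intro h)]
      linarith
    · rw [if_pos h]
      have hor : a = b ∨ a = c ∨ a = d ∨ b = c ∨ b = d ∨ c = d := by
        unfold dist4 at h; tauto
      rcases hor with h|h|h|h|h|h <;> rw [if_pos h] <;> linarith
  refine step.trans (le_of_eq ?_)
  simp only [Finset.sum_add_distrib]
  have e1 : (∑ a : Fin n, ∑ b : Fin n, ∑ _c : Fin n, ∑ _d : Fin n,
      (if a = b then (1:ℝ) else 0)) = (n:ℝ)^3 := by
    simp [Finset.sum_ite_eq, Finset.sum_const, Finset.card_univ]; ring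
  have e2 : (∑ a : Fin n, ∑ _b : Fin n, ∑ c : Fin n, ∑ _d : Fin n,
      (if a = c then (1:ℝ) else 0)) = (n:ℝ)^3 := by
    simp [Finset.sum_ite_eq, Finset.sum_const, Finset.card_univ]; ring
  have e3 : (∑ a : Fin n, ∑ _b : Fin n, ∑ _c : Fin n, ∑ d : Fin n,
      (if a = d then (1:ℝ) else 0)) = (n:ℝ)^3 := by
    simp [Finset.sum_ite_eq, Finset.sum_const, Finset.card_univ]; ring
  have e4 : (∑ _a : Fin n, ∑ b : Fin n, ∑ c : Fin n, ∑ _d : Fin n,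
      (if b = c then (1:ℝ) else 0)) = (n:ℝ)^3 := by
    simp [Finset.sum_ite_eq, Finset.sum_const, Finset.card_univ]; ring
  have e5 : (∑ _a : Fin n, ∑ b : Fin n, ∑ _c : Fin n, ∑ d : Fin n,
      (if b = d then (1:ℝ) else 0)) = (n:ℝ)^3 := by
    simp [Finset.sum_ite_eq, Finset.sum_const, Finset.card_univ]; ring
  have e6 : (∑ _a : Fin n, ∑ _b : Fin n, ∑ c : Fin n, ∑ d : Fin n,
      (if c = d then (1:ℝ) else 0)) = (n:ℝ)^3 := by
    simp [Finset.sum_ite_eq, Finset.sum_const, Finset.card_univ]; ring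
  rw [e1, e2, e3, e4, e5, e6]; ring

lemma Nval_le (n : ℕ) : Nval n ≤ (n:ℝ)^4 := by
  rw [Nval]
  refine le_trans (Finset.sum_le_sum fun a _ => Finset.sum_le_sum fun b _ =>
    Finset.sum_le_sum fun c _ => Finset.sum_le_sum fun d _ => ind_le_one _)
    (le_of_eq ?_)
  simp [Finset.sum_const, Finset.card_univ]; ring

lemma Nval_ge (n : ℕ) : (n:ℝ)^4 - 6*(n:ℝ)^3 ≤ Nval n := by
  have hsplit : Nval n + (∑ a : Fin n, ∑ b : Fin n, ∑ c : Fin n, ∑ d : Fin n,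
      if ¬ dist4 a b c d then (1:ℝ) else 0) = (n:ℝ)^4 := by
    rw [Nval]
    simp only [← Finset.sum_add_distrib]
    have : ∀ a b c d : Fin n, ((if dist4 a b c d then (1:ℝ) else 0)
        + if ¬ dist4 a b c d then (1:ℝ) else 0) = 1 := by
      intro a b c d
      by_cases h : dist4 a b c d
      · rw [if_pos h, if_neg (not_not_intro h), add_zero]
      · rw [if_neg h, if_pos h, zero_add]
    simp only [this]
    simp [Finset.sum_const, Finset.card_univ]; ring
  have := bad_le n
  linarith

lemma Nval_nonneg (n : ℕ) : 0 ≤ Nval n := by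
  rw [Nval]
  exact Finset.sum_nonneg fun a _ => Finset.sum_nonneg fun b _ =>
    Finset.sum_nonneg fun c _ => Finset.sum_nonneg fun d _ => ind_nonneg _

lemma Dsum_nonneg (n : ℕ) (w : Fin n → Fin n → ℝ) (hw0 : ∀ a b, 0 ≤ w a b) :
    0 ≤ Dsum n w := by
  rw [Dsum]
  refine Finset.sum_nonneg fun a _ => Finset.sum_nonneg fun b _ =>
    Finset.sum_nonneg fun c _ => Finset.sum_nonneg fun d _ => ?_
  split
  · exact mul_nonneg (hw0 _ _) (hw0 _ _)
  · exact le_refl _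

lemma Dsum_sq_bounds (n : ℕ) (w : Fin n → Fin n → ℝ)
    (hw0 : ∀ a b, 0 ≤ w a b) (hw1 : ∀ a b, w a b ≤ 1) :
    (∑ a : Fin n, ∑ b : Fin n, w a b)^2 - 6*(n:ℝ)^3 ≤ Dsum n w ∧
      Dsum n w ≤ (∑ a : Fin n, ∑ b : Fin n, w a b)^2 := by
  set S : ℝ := ∑ a : Fin n, ∑ b : Fin n, w a b with hS
  have hexp : S^2 = ∑ a : Fin n, ∑ b : Fin n, ∑ c : Fin n, ∑ d : Fin n, w a b * w c d := by
    rw [pow_two, hS, Finset.sum_mul]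
    refine Finset.sum_congr rfl fun a _ => ?_
    rw [Finset.sum_mul]
    refine Finset.sum_congr rfl fun b _ => ?_
    rw [Finset.mul_sum]
    refine Finset.sum_congr rfl fun c _ => ?_
    rw [Finset.mul_sum]
  have hsplit : (∑ a : Fin n, ∑ b : Fin n, ∑ c : Fin n, ∑ d : Fin n, w a b * w c d)
      = Dsum n w + ∑ a : Fin n, ∑ b : Fin n, ∑ c : Fin n, ∑ d : Fin n,
        (if ¬ dist4 a b c d then w a b * w c d else 0) := by
    rw [Dsum]
    simp only [← Finset.sum_add_distrib]
    refine Finset.sum_congr rfl fun a _ => Finset.sum_congr rfl fun b _ =>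
      Finset.sum_congr rfl fun c _ => Finset.sum_congr rfl fun d _ => ?_
    by_cases h : dist4 a b c d
    · rw [if_pos h, if_neg (not_not_intro h), add_zero]
    · rw [if_neg h, if_pos h, zero_add]
  have hbad0 : 0 ≤ ∑ a : Fin n, ∑ b : Fin n, ∑ c : Fin n, ∑ d : Fin n,
      (if ¬ dist4 a b c d then w a b * w c d else 0) := by
    refine Finset.sum_nonneg fun a _ => Finset.sum_nonneg fun b _ =>
      Finset.sum_nonneg fun c _ => Finset.sum_nonneg fun d _ => ?_
    split
    · exact mul_nonneg (hw0 _ _) (hw0 _ _)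
    · exact le_refl _
  have hbad1 : (∑ a : Fin n, ∑ b : Fin n, ∑ c : Fin n, ∑ d : Fin n,
      (if ¬ dist4 a b c d then w a b * w c d else 0)) ≤ 6*(n:ℝ)^3 := by
    refine le_trans (Finset.sum_le_sum fun a _ => Finset.sum_le_sum fun b _ =>
      Finset.sum_le_sum fun c _ => Finset.sum_le_sum fun d _ => ?_) (bad_le n)
    by_cases h : ¬ dist4 a b c d
    · rw [if_pos h, if_pos h]
      exact mul_le_one₀ (hw1 _ _) (hw0 _ _) (hw1 _ _)
    · rw [if_neg h, if_neg h]
  constructor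
  · rw [hexp, hsplit] at *; linarith
  · rw [hexp, hsplit]; linarith

end AuxD
section AuxE
open Finset
variable {n : ℕ}

lemma crossSet_bddBelow (w : Fin n → Fin n → ℝ) (hw0 : ∀ a b, 0 ≤ w a b) :
    BddBelow {x : ℝ | ∃ f : Fin n → ℝ × ℝ,
      Function.Injective f ∧ GenPos f ∧ crossCount w f = x} :=
  ⟨0, fun _ ⟨f, _, _, hx⟩ => hx ▸ crossCount_nonneg w hw0 f⟩

lemma wrcr_le_crossCount (w : Fin n → Fin n → ℝ) (hw0 : ∀ a b, 0 ≤ w a b)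
    (f : Fin n → ℝ × ℝ) (hf : Function.Injective f) (hg : GenPos f) :
    wrcr (Fin n) w ≤ crossCount w f :=
  csInf_le (crossSet_bddBelow w hw0) ⟨f, hf, hg, rfl⟩

lemma wrcr_nonneg (w : Fin n → Fin n → ℝ) (hw0 : ∀ a b, 0 ≤ w a b) :
    0 ≤ wrcr (Fin n) w := by
  rw [wrcr]
  apply Real.sInf_nonneg
  rintro x ⟨f, _, _, hx⟩
  exact hx ▸ crossCount_nonneg w hw0 f

lemma adjW_nonneg {V : Type*} (G : SimpleGraph V) : ∀ a b : V, 0 ≤ adjW G a b := by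
  intro a b; rw [adjW]; exact ind_nonneg _

lemma adjW_le_one {V : Type*} (G : SimpleGraph V) : ∀ a b : V, adjW G a b ≤ 1 := by
  intro a b; rw [adjW]; exact ind_le_one _

lemma wrcr_top_le (n : ℕ) :
    wrcr (Fin n) (adjW (⊤ : SimpleGraph (Fin n))) ≤ (n:ℝ)^4 := by
  obtain ⟨f, hf, hg⟩ := exists_good n
  exact (wrcr_le_crossCount _ (adjW_nonneg _) f hf hg).trans
    (crossCount_le _ (adjW_le_one _) (adjW_nonneg _) f)

lemma Nval_pos (hn : 7 ≤ n) : (0:ℝ) < Nval n := by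
  have h7 : (7:ℝ) ≤ (n:ℝ) := by exact_mod_cast hn
  have h1 := Nval_ge n
  have h3 : (0:ℝ) < (n:ℝ)^3 := by positivity
  nlinarith [mul_nonneg h3.le (show (0:ℝ) ≤ (n:ℝ) - 7 by linarith)]

lemma key2 (hn : 7 ≤ n) (w : Fin n → Fin n → ℝ) (hw0 : ∀ a b, 0 ≤ w a b) :
    wrcr (Fin n) w ≤ (Dsum n w / Nval n) *
      wrcr (Fin n) (adjW (⊤ : SimpleGraph (Fin n))) := by
  have hN : (0:ℝ) < Nval n := Nval_pos hn
  have hD0 : 0 ≤ Dsum n w := Dsum_nonneg n w hw0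
  have hc0 : 0 ≤ Dsum n w / Nval n := div_nonneg hD0 hN.le
  -- wrcr w ≤ (D/N) * x for every x in the set for ⊤
  have hub : ∀ x : ℝ, (∃ f : Fin n → ℝ × ℝ, Function.Injective f ∧ GenPos f ∧
      crossCount (adjW (⊤ : SimpleGraph (Fin n))) f = x) →
      wrcr (Fin n) w ≤ (Dsum n w / Nval n) * x := by
    rintro x ⟨f, hf, hg, rfl⟩
    obtain ⟨f', hf', hg', hkey⟩ := key (by omega) w hw0 f hf hg
    refine (wrcr_le_crossCount w hw0 f' hf' hg').trans ?_
    rw [div_mul_eq_mul_div, le_div_iff₀ hN]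
    nlinarith [hkey]
  obtain ⟨f0, hf0, hg0⟩ := exists_good n
  have hmem : crossCount (adjW (⊤ : SimpleGraph (Fin n))) f0 ∈
      {x : ℝ | ∃ f : Fin n → ℝ × ℝ, Function.Injective f ∧ GenPos f ∧
        crossCount (adjW (⊤ : SimpleGraph (Fin n))) f = x} := ⟨f0, hf0, hg0, rfl⟩
  rcases eq_or_lt_of_le hc0 with hc | hc
  · have h0 := hub _ hmem
    rw [← hc] at h0 ⊢
    rw [zero_mul] at h0 ⊢
    exact h0
  · rw [wrcr]
    have hle : wrcr (Fin n) w / (Dsum n w / Nval n) ≤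
        sInf {x : ℝ | ∃ f : Fin n → ℝ × ℝ, Function.Injective f ∧ GenPos f ∧
          crossCount (adjW (⊤ : SimpleGraph (Fin n))) f = x} := by
      refine le_csInf ⟨_, hmem⟩ fun x hx => ?_
      rw [div_le_iff₀ hc]
      rw [mul_comm]
      exact hub x hx
    calc wrcr (Fin n) w
        = (wrcr (Fin n) w / (Dsum n w / Nval n)) * (Dsum n w / Nval n) :=
          (div_mul_cancel₀ (wrcr (Fin n) w) hc.ne').symm
      _ ≤ sInf _ * (Dsum n w / Nval n) := mul_le_mul_of_nonneg_right hle hc0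
      _ = (Dsum n w / Nval n) * sInf _ := mul_comm _ _

end AuxE
/-- For a quasi-random sequence with density `p`: `cr̄(G_n) ≤ p^2 cr̄(K_n) + o(n^4)`. -/
theorem stmt_16 (p : ℝ) (hp : 0 < p) (hp1 : p < 1)
    (G : ∀ n : ℕ, SimpleGraph (Fin n))
    (hqr : ∃ o : ℕ → ℝ,
      Filter.Tendsto (fun n => o n / (n : ℝ) ^ 2) Filter.atTop (nhds 0) ∧
      ∀ n : ℕ, ∀ X Y : Finset (Fin n),
        |eG (G n) X Y - p * X.card * Y.card| ≤ o n) :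
    ∃ g : ℕ → ℝ, Filter.Tendsto (fun n => g n / (n : ℝ) ^ 4) Filter.atTop (nhds 0) ∧
      ∀ n : ℕ, rcr n (G n) ≤ p ^ 2 * rcr n ⊤ + g n := by
  classical
  obtain ⟨o, ho, hXY⟩ := hqr
  have ho0 : ∀ n, 0 ≤ o n := fun n => le_trans (abs_nonneg _) (hXY n ∅ ∅)
  refine ⟨fun n => if 7 ≤ n then
      (Dsum n (adjW (G n)) / Nval n - p^2) * rcr n ⊤
    else rcr n (G n), ?_, ?_⟩
  · -- tendsto
    have h96 : Filter.Tendsto (fun n : ℕ => (96:ℝ) / (n:ℝ)) Filter.atTop (nhds 0) :=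
      tendsto_const_div_atTop_nhds_zero_nat 96
    have hlim : Filter.Tendsto (fun n : ℕ =>
        8*((o n / (n:ℝ)^2) * (o n / (n:ℝ)^2)) + 16*(o n/(n:ℝ)^2) + 96/(n:ℝ))
        Filter.atTop (nhds 0) := by
      have := (((ho.mul ho).const_mul (8:ℝ)).add (ho.const_mul (16:ℝ))).add h96
      simpa using this
    refine squeeze_zero_norm' ?_ hlim
    filter_upwards [Filter.eventually_ge_atTop 7] with n hn
    rw [if_pos hn]
    set nn : ℝ := (n:ℝ) with hnn
    have hn7 : (7:ℝ) ≤ nn := by rw [hnn]; exact_mod_cast hn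
    have hnpos : (0:ℝ) < nn := by linarith
    set D : ℝ := Dsum n (adjW (G n)) with hD
    set N : ℝ := Nval n with hN
    set R : ℝ := rcr n ⊤ with hR
    have hR0 : (0:ℝ) ≤ R := wrcr_nonneg _ (adjW_nonneg _)
    have hR4 : R ≤ nn^4 := wrcr_top_le n
    have hNl : nn^4 - 6*nn^3 ≤ N := Nval_ge n
    have hNu : N ≤ nn^4 := Nval_le n
    have hN8 : nn^4/8 ≤ N := by nlinarith [mul_nonneg (pow_nonneg hnpos.le 3) (show (0:ℝ) ≤ 7*nn - 48 by linarith)]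
    have hNpos : (0:ℝ) < N := lt_of_lt_of_le (by positivity) hN8
    -- edge count
    set S : ℝ := ∑ a : Fin n, ∑ b : Fin n, adjW (G n) a b with hSdef
    have hS : |S - p * nn^2| ≤ o n := by
      have h := hXY n Finset.univ Finset.univ
      have hcard : ((Finset.univ : Finset (Fin n)).card : ℝ) = nn := by
        simp [Finset.card_univ, hnn]
      have heq : eG (G n) Finset.univ Finset.univ = S := rfl
      rw [heq, hcard] at h
      rw [show p * nn^2 = p * nn * nn by ring]
      exact h
    have hS0 : (0:ℝ) ≤ S :=
      Finset.sum_nonneg fun a _ => Finset.sum_nonneg fun b _ => adjW_nonneg _ _ _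
    obtain ⟨hD1, hD2⟩ := Dsum_sq_bounds n (adjW (G n)) (adjW_nonneg _) (adjW_le_one _)
    rw [← hSdef, ← hD] at hD1 hD2
    -- |D - p² n⁴| ≤ B
    have hSub : S ≤ p*nn^2 + o n := by
      have := abs_le.mp hS; linarith [this.2]
    have habs2 : |S^2 - (p*nn^2)^2| ≤ o n * (o n + 2*nn^2) := by
      have hfac : S^2 - (p*nn^2)^2 = (S - p*nn^2) * (S + p*nn^2) := by ring
      rw [hfac, abs_mul]
      have h2 : |S + p*nn^2| ≤ o n + 2*nn^2 := by
        rw [abs_of_nonneg (by nlinarith)]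
        nlinarith
      exact mul_le_mul hS h2 (abs_nonneg _) (ho0 n)
    have hDd : |D - S^2| ≤ 6*nn^3 := abs_le.mpr ⟨by linarith, by linarith⟩
    have hDa : |D - p^2*nn^4| ≤ o n * (o n + 2*nn^2) + 6*nn^3 := by
      have hsp : D - p^2*nn^4 = (D - S^2) + (S^2 - (p*nn^2)^2) := by ring
      rw [hsp]
      exact (abs_add_le _ _).trans (by linarith)
    set B : ℝ := o n * (o n + 2*nn^2) + 6*nn^3 with hB
    -- |D/N - p²| bound
    have hp2 : p^2 ≤ 1 := by nlinarith
    have hDb : |D - p^2*N| ≤ B + 6*nn^3 := by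
      have hsp : D - p^2*N = (D - p^2*nn^4) + p^2*(nn^4 - N) := by ring
      rw [hsp]
      refine (abs_add_le _ _).trans ?_
      have hge : (0:ℝ) ≤ nn^4 - N := by linarith
      have h1a : (0:ℝ) ≤ p^2*(nn^4-N) := mul_nonneg (sq_nonneg p) hge
      have h1b : p^2*(nn^4-N) ≤ 1*(nn^4-N) := mul_le_mul_of_nonneg_right hp2 hge
      have h1 : |p^2*(nn^4 - N)| ≤ 6*nn^3 := by
        rw [abs_of_nonneg h1a]; linarith
      linarith
    have hnn3 : (0:ℝ) ≤ nn^3 := by positivity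
    have hnn2 : (0:ℝ) ≤ nn^2 := by positivity
    have hB0 : (0:ℝ) ≤ B := by
      rw [hB]
      have h1 : (0:ℝ) ≤ o n * (o n + 2*nn^2) := mul_nonneg (ho0 n) (by linarith [ho0 n])
      linarith
    have hquot : |D/N - p^2| ≤ (B + 6*nn^3)*8/nn^4 := by
      have heq : D/N - p^2 = (D - p^2*N)/N := by field_simp
      rw [heq, abs_div, abs_of_pos hNpos]
      calc |D - p^2*N| / N ≤ (B + 6*nn^3) / (nn^4/8) := by
            apply div_le_div₀ (by linarith) hDb (by positivity) hN8
        _ = (B + 6*nn^3)*8/nn^4 := by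
            rw [div_div_eq_mul_div]
    -- final bound
    have hnorm : ‖(D/N - p^2) * R / nn^4‖ = |D/N - p^2| * R / nn^4 := by
      rw [Real.norm_eq_abs, abs_div, abs_mul, abs_of_nonneg hR0,
        abs_of_pos (by positivity : (0:ℝ) < nn^4)]
    rw [hnorm]
    have hq0 : (0:ℝ) ≤ (B + 6*nn^3)*8/nn^4 := by
      apply div_nonneg (by linarith) (by positivity)
    have hstep : |D/N - p^2| * R ≤ ((B + 6*nn^3)*8/nn^4) * nn^4 :=
      mul_le_mul hquot hR4 hR0 hq0
    calc |D/N - p^2| * R / nn^4 ≤ (((B + 6*nn^3)*8/nn^4) * nn^4) / nn^4 := by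
          apply div_le_div_of_nonneg_right hstep (by positivity)
        _ = 8*((o n / nn^2) * (o n / nn^2)) + 16*(o n/nn^2) + 96/nn := by
          rw [hB]
          field_simp
          ring
  · -- the inequality
    intro n
    dsimp only
    by_cases hn : 7 ≤ n
    · rw [if_pos hn]
      have h := key2 hn (adjW (G n)) (adjW_nonneg _)
      have h' : rcr n (G n) ≤ (Dsum n (adjW (G n)) / Nval n) * rcr n ⊤ := h
      have hr : p^2 * rcr n ⊤ + (Dsum n (adjW (G n)) / Nval n - p^2) * rcr n ⊤
          = (Dsum n (adjW (G n)) / Nval n) * rcr n ⊤ := by ring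
      linarith
    · rw [if_neg hn]
      have h2 : 0 ≤ p^2 * rcr n ⊤ :=
        mul_nonneg (sq_nonneg p) (wrcr_nonneg _ (adjW_nonneg _))
      linarith
end
end
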